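/- arXiv:2101.03576 — 6 statements merged into one kernel-verified Lean document; each statement's English description precedes it below -/
import Mathlib

section
/- Let s = (s_1,…,s_r) and t = (t_1,…,t_r) be r-tuples of non-negative integers and ζ a primitive n-th root of unity. Then H_{n−1}(s; t; ζ) = (−1)^{w(s)} · H_{n−1}(s̄; s̄ − t̄; ζ), where s̄ denotes the reverse tuple (s_r,…,s_1) and w(s) = s_1 + ⋯ + s_r. -/
open Finset

/-- The q-analog of a natural number: `[k]_q = (1 - q^k)/(1 - q)`. -/
noncomputable def qnum (q : ℂ) (k : ℕ) : ℂ := (1 - q ^ k) / (1 - q)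

/-- Nested sum for `H_n(s;t;q)`, recursing from the top index; the list is the
reversed list of pairs `(s_i, t_i)`. -/
noncomputable def Hrev (q : ℂ) : ℕ → List (ℕ × ℤ) → ℂ
  | _, [] => 1
  | n, (s, t) :: rest =>
      ∑ k ∈ Finset.Icc 1 n, q ^ ((k : ℤ) * t) / qnum q k ^ s * Hrev q (k - 1) rest

/-- `H q n s t = H_n(s;t;q) = Σ_{1 ≤ k_1 < ⋯ < k_r ≤ n} ∏ q^{k_i t_i}/[k_i]_q^{s_i}`. -/
noncomputable def H (q : ℂ) (n : ℕ) (s : List ℕ) (t : List ℤ) : ℂ :=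
  Hrev q n (s.zip t).reverse

/-- Forward recursion: indices taken in `Ico a b`, peeling the smallest index. -/
noncomputable def F (q : ℂ) : ℕ → ℕ → List (ℕ × ℤ) → ℂ
  | _, _, [] => 1
  | a, b, (s, t) :: rest =>
      ∑ k ∈ Finset.Ico a b, q ^ ((k : ℤ) * t) / qnum q k ^ s * F q (k + 1) b rest

theorem F_append (q : ℂ) (p : ℕ × ℤ) :
    ∀ (L : List (ℕ × ℤ)) (a b : ℕ),
      F q a b (L ++ [p]) =
        ∑ k ∈ Finset.Ico a b, q ^ ((k : ℤ) * p.2) / qnum q k ^ p.1 * F q a k L := by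
  intro L
  induction L with
  | nil => intro a b; obtain ⟨s, t⟩ := p; simp [F]
  | cons hd tl ih =>
    intro a b
    obtain ⟨s, t⟩ := hd
    obtain ⟨s', t'⟩ := p
    show (∑ m ∈ Finset.Ico a b, q ^ ((m : ℤ) * t) / qnum q m ^ s * F q (m + 1) b (tl ++ [(s', t')]))
      = _
    have := Finset.sum_Ico_Ico_comm' a b (fun m k =>
      q ^ ((m : ℤ) * t) / qnum q m ^ s *
        (q ^ ((k : ℤ) * t') / qnum q k ^ s' * F q (m + 1) k tl))
    calc (∑ m ∈ Finset.Ico a b, q ^ ((m : ℤ) * t) / qnum q m ^ s * F q (m + 1) b (tl ++ [(s', t')]))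
        = ∑ m ∈ Finset.Ico a b, ∑ k ∈ Finset.Ico (m + 1) b,
            q ^ ((m : ℤ) * t) / qnum q m ^ s *
              (q ^ ((k : ℤ) * t') / qnum q k ^ s' * F q (m + 1) k tl) := by
          refine Finset.sum_congr rfl fun m _ => ?_
          rw [ih (m + 1) b, Finset.mul_sum]
      _ = ∑ k ∈ Finset.Ico a b, ∑ m ∈ Finset.Ico a k,
            q ^ ((m : ℤ) * t) / qnum q m ^ s *
              (q ^ ((k : ℤ) * t') / qnum q k ^ s' * F q (m + 1) k tl) := this
      _ = ∑ k ∈ Finset.Ico a b, q ^ ((k : ℤ) * t') / qnum q k ^ s' *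
            F q a k ((s, t) :: tl) := by
          refine Finset.sum_congr rfl fun k _ => ?_
          show _ = _ * ∑ m ∈ Finset.Ico a k, q ^ ((m : ℤ) * t) / qnum q m ^ s * F q (m + 1) k tl
          rw [Finset.mul_sum]
          refine Finset.sum_congr rfl fun m _ => ?_
          ring

theorem Hrev_eq_F (q : ℂ) :
    ∀ (M : List (ℕ × ℤ)) (m : ℕ), Hrev q m M = F q 1 (m + 1) M.reverse := by
  intro M
  induction M with
  | nil => intro m; simp [Hrev, F]
  | cons hd tl ih =>
    intro m
    obtain ⟨s, t⟩ := hd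
    show (∑ k ∈ Finset.Icc 1 m, q ^ ((k : ℤ) * t) / qnum q k ^ s * Hrev q (k - 1) tl) = _
    rw [List.reverse_cons, F_append]
    rw [show Finset.Icc 1 m = Finset.Ico 1 (m + 1) by rw [Finset.Ico_add_one_right_eq_Icc]]
    refine Finset.sum_congr rfl fun k hk => ?_
    rw [ih (k - 1)]
    congr 2
    have : 1 ≤ k := (Finset.mem_Ico.mp hk).1
    omega

/-- The dual of a pair list. -/
def dualL (L : List (ℕ × ℤ)) : List (ℕ × ℤ) := L.map (fun p => (p.1, (p.1 : ℤ) - p.2))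

theorem key_term (n : ℕ) (hn : 0 < n) (ζ : ℂ) (hζ : IsPrimitiveRoot ζ n)
    (j : ℕ) (hj1 : 1 ≤ j) (hjn : j ≤ n) (s : ℕ) (t : ℤ) :
    ζ ^ (((n - j : ℕ) : ℤ) * t) / qnum ζ (n - j) ^ s
      = (-1) ^ s * (ζ ^ ((j : ℤ) * ((s : ℤ) - t)) / qnum ζ j ^ s) := by
  have hζ0 : ζ ≠ 0 := hζ.ne_zero hn.ne'
  have hζn : ζ ^ n = 1 := hζ.pow_eq_one
  have hζj0 : ζ ^ j ≠ 0 := pow_ne_zero _ hζ0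
  -- rewrite the zpow
  have e2 : ζ ^ (((n - j : ℕ) : ℤ) * t) = ζ ^ (-(j : ℤ) * t) := by
    have h1 : ((n - j : ℕ) : ℤ) * t = (n : ℤ) * t + (-(j : ℤ) * t) := by
      have : ((n - j : ℕ) : ℤ) = (n : ℤ) - j := by push_cast [hjn]; ring
      rw [this]; ring
    rw [h1, zpow_add₀ hζ0, zpow_mul, zpow_natCast, hζn, one_zpow, one_mul]
  -- relation between qnum (n-j) and qnum j
  have hpow : ζ ^ (n - j) = (ζ ^ j)⁻¹ := by
    have h : ζ ^ (n - j) * ζ ^ j = 1 := by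
      rw [← pow_add, Nat.sub_add_cancel hjn, hζn]
    field_simp at h ⊢
    linear_combination h
  have e1 : qnum ζ (n - j) = -(ζ ^ j)⁻¹ * qnum ζ j := by
    unfold qnum
    rw [hpow]
    rcases eq_or_ne (1 - ζ) 0 with h | h
    · rw [h, div_zero, div_zero, mul_zero]
    · field_simp; ring
  have e3 : ζ ^ ((j : ℤ) * ((s : ℤ) - t)) = (ζ ^ j) ^ s * ζ ^ (-(j : ℤ) * t) := by
    have h1 : (j : ℤ) * ((s : ℤ) - t) = (j * s : ℕ) + (-(j : ℤ) * t) := by push_cast; ring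
    rw [h1, zpow_add₀ hζ0, zpow_natCast, pow_mul]
  rw [e1, e2, e3, mul_pow, neg_pow]
  set Q := qnum ζ j ^ s with hQ
  set c : ℂ := (-1) ^ s * ((ζ ^ j)⁻¹) ^ s with hc
  have hc0 : c ≠ 0 := by
    apply mul_ne_zero
    · exact pow_ne_zero _ (by norm_num)
    · exact pow_ne_zero _ (inv_ne_zero hζj0)
  have hcd : c * ((-1) ^ s * ((ζ ^ j) ^ s * ζ ^ (-(j : ℤ) * t))) = ζ ^ (-(j : ℤ) * t) := by
    rw [hc]
    have h1 : ((-1 : ℂ)) ^ s * (-1 : ℂ) ^ s = 1 := by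
      rw [← pow_add, ← two_mul, pow_mul]
      norm_num
    have h2 : ((ζ ^ j)⁻¹) ^ s * (ζ ^ j) ^ s = 1 := by
      rw [← mul_pow, inv_mul_cancel₀ hζj0, one_pow]
    calc (-1 : ℂ) ^ s * ((ζ ^ j)⁻¹) ^ s * ((-1) ^ s * ((ζ ^ j) ^ s * ζ ^ (-(j : ℤ) * t)))
        = ((-1 : ℂ) ^ s * (-1) ^ s) * (((ζ ^ j)⁻¹) ^ s * (ζ ^ j) ^ s) * ζ ^ (-(j : ℤ) * t) := by
          ring
      _ = ζ ^ (-(j : ℤ) * t) := by rw [h1, h2]; ring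
  calc ζ ^ (-(j : ℤ) * t) / ((-1) ^ s * ((ζ ^ j)⁻¹) ^ s * Q)
      = c * ((-1) ^ s * ((ζ ^ j) ^ s * ζ ^ (-(j : ℤ) * t))) / (c * Q) := by rw [hcd]
    _ = (-1) ^ s * ((ζ ^ j) ^ s * ζ ^ (-(j : ℤ) * t)) / Q := mul_div_mul_left _ _ hc0
    _ = (-1) ^ s * ((ζ ^ j) ^ s * ζ ^ (-(j : ℤ) * t) / Q) := by rw [mul_div_assoc]

theorem duality (n : ℕ) (hn : 0 < n) (ζ : ℂ) (hζ : IsPrimitiveRoot ζ n) :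
    ∀ (L : List (ℕ × ℤ)) (a : ℕ), 1 ≤ a → a ≤ n →
      F ζ a n L = (-1) ^ (L.map Prod.fst).sum * Hrev ζ (n - a) (dualL L) := by
  intro L
  induction L with
  | nil => intro a _ _; simp [F, dualL, Hrev]
  | cons hd tl ih =>
    intro a ha1 han
    obtain ⟨s, t⟩ := hd
    show (∑ k ∈ Finset.Ico a n, ζ ^ ((k : ℤ) * t) / qnum ζ k ^ s * F ζ (k + 1) n tl) = _
    have hrhs : (-1 : ℂ) ^ (((s, t) :: tl).map Prod.fst).sum * Hrev ζ (n - a) (dualL ((s, t) :: tl))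
        = ∑ j ∈ Finset.Icc 1 (n - a), (-1 : ℂ) ^ (s + (tl.map Prod.fst).sum) *
            (ζ ^ ((j : ℤ) * ((s : ℤ) - t)) / qnum ζ j ^ s * Hrev ζ (j - 1) (dualL tl)) := by
      show (-1 : ℂ) ^ (s + (tl.map Prod.fst).sum) *
          Hrev ζ (n - a) ((s, (s : ℤ) - t) :: dualL tl) = _
      rw [show Hrev ζ (n - a) ((s, (s : ℤ) - t) :: dualL tl)
          = ∑ j ∈ Finset.Icc 1 (n - a),
              ζ ^ ((j : ℤ) * ((s : ℤ) - t)) / qnum ζ j ^ s * Hrev ζ (j - 1) (dualL tl) from rfl]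
      rw [Finset.mul_sum]
    rw [hrhs]
    -- reindex j = n - k
    refine Finset.sum_nbij' (fun k => n - k) (fun j => n - j) ?_ ?_ ?_ ?_ ?_
    · intro k hk
      simp only [Finset.mem_Ico] at hk
      simp only [Finset.mem_Icc]
      omega
    · intro j hj
      simp only [Finset.mem_Icc] at hj
      simp only [Finset.mem_Ico]
      omega
    · intro k hk
      simp only [Finset.mem_Ico] at hk
      show n - (n - k) = k
      omega
    · intro j hj
      simp only [Finset.mem_Icc] at hj
      show n - (n - j) = j
      omega
    · intro k hk
      simp only [Finset.mem_Ico] at hk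
      have hk1 : 1 ≤ k := le_trans ha1 hk.1
      have h1 : 1 ≤ n - k := by omega
      have h2 : n - k ≤ n := by omega
      have hkey := key_term n hn ζ hζ (n - k) h1 h2 s t
      rw [show n - (n - k) = k by omega] at hkey
      rw [ih (k + 1) (by omega) (by omega),
        show n - (k + 1) = (n - k) - 1 by omega, hkey, pow_add]
      ring

theorem zipWith_coe (s : List ℕ) : ∀ t : List ℤ,
    (List.zipWith (fun a b => (a : ℤ) - b) s t)
      = List.zipWith (fun (a : ℕ) b => (a : ℤ) - b) s t := by
  induction s with
  | nil => intro t; simp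
  | cons a s ih =>
    intro t
    cases t with
    | nil => simp
    | cons b t => simpa using ih t

theorem zip_zipWith_sub (s : List ℕ) :
    ∀ t : List ℤ, s.length = t.length →
      s.zip (List.zipWith (fun (a : ℕ) b => (a : ℤ) - b) s t) = dualL (s.zip t) := by
  induction s with
  | nil => intro t _; simp [dualL]
  | cons a s ih =>
    intro t hlen
    cases t with
    | nil => simp at hlen
    | cons b t =>
      simp only [List.zipWith_cons_cons, List.zip_cons_cons, dualL, List.map_cons]
      refine congrArg _ ?_
      exact ih t (by simpa using hlen)

theorem zip_reverse' {α β : Type*} :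
    ∀ (s : List α) (u : List β), s.length = u.length →
      s.reverse.zip u.reverse = (s.zip u).reverse := by
  intro s
  induction s with
  | nil => intro u h; simp
  | cons a s ih =>
    intro u h
    cases u with
    | nil => simp at h
    | cons b u =>
      have hlen : s.length = u.length := by simpa using h
      simp only [List.reverse_cons]
      rw [List.zip_append (by simp [hlen]), ih u hlen, List.zip_cons_cons]
      simp

theorem stmt2 (n : ℕ) (hn : 0 < n) (ζ : ℂ) (hζ : IsPrimitiveRoot ζ n)
    (s : List ℕ) (t : List ℤ) (hlen : s.length = t.length) (ht : ∀ x ∈ t, 0 ≤ x) :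
    H ζ (n - 1) s t
      = (-1) ^ s.sum *
        H ζ (n - 1) s.reverse (List.zipWith (fun a b => (a : ℤ) - b) s t).reverse := by
  rw [zipWith_coe]
  set u := List.zipWith (fun (a : ℕ) b => (a : ℤ) - b) s t with hu
  have hul : u.length = s.length := by
    rw [hu, List.length_zipWith, hlen, min_self]
  unfold H
  have h1 : Hrev ζ (n - 1) (s.zip t).reverse = F ζ 1 n (s.zip t) := by
    rw [Hrev_eq_F ζ ((s.zip t).reverse) (n - 1), List.reverse_reverse,
      show n - 1 + 1 = n by omega]
  have h2 : (s.reverse.zip u.reverse).reverse = dualL (s.zip t) := by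
    rw [zip_reverse' s u hul.symm, List.reverse_reverse, hu, zip_zipWith_sub s t hlen]
  have h3 : ((s.zip t).map Prod.fst).sum = s.sum := by
    rw [List.map_fst_zip (le_of_eq hlen)]
  rw [h1, h2, duality n hn ζ hζ (s.zip t) 1 le_rfl hn, h3]
end

section
/- For any n-th primitive root of unity ζ and any non-negative integer r with r < n, z_n({1}^r; ζ) = (1/n)·C(n, r+1)·(1−ζ)^r, where C denotes the ordinary binomial coefficient. -/
open Finset
open Polynomial

/-- Nested sum for `z_n`, recursing from the top index: the list is the
reversed tuple of exponents.  `zrev q n [s_r, …, s_1]`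
`= Σ_{1 ≤ k_1 < ⋯ < k_r ≤ n} ∏ q^{(s_i-1)k_i}/[k_i]_q^{s_i}`. -/
noncomputable def zrev (q : ℂ) : ℕ → List ℕ → ℂ
  | _, [] => 1
  | n, s :: rest =>
      ∑ k ∈ Finset.Icc 1 n, q ^ ((s - 1) * k) / qnum q k ^ s * zrev q (k - 1) rest

/-- `z n s ζ = z_n(s; ζ) = Σ_{1 ≤ k_1 < ⋯ < k_r ≤ n-1} ζ^{Σ (s_i-1)k_i} / ∏ [k_i]_ζ^{s_i}`. -/
noncomputable def z (ζ : ℂ) (n : ℕ) (s : List ℕ) : ℂ := zrev ζ (n - 1) s.reverse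

lemma sum_step (g : ℕ → ℂ) (r : ℕ) : ∀ m : ℕ,
    ∑ k ∈ Icc 1 m, g k * ∑ A ∈ (Icc 1 (k-1)).powersetCard r, ∏ j ∈ A, g j
      = ∑ A ∈ (Icc 1 m).powersetCard (r+1), ∏ j ∈ A, g j := by
  intro m
  induction m with
  | zero =>
    rw [show Icc 1 0 = (∅ : Finset ℕ) by simp, Finset.powersetCard_eq_empty.2 (by simp),
      Finset.sum_empty, Finset.sum_empty]
  | succ m ih =>
    have hnot : m + 1 ∉ Icc 1 m := by simp
    have hins : Icc 1 (m+1) = insert (m+1) (Icc 1 m) := by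
      ext x; simp [Finset.mem_Icc]; omega
    rw [Finset.sum_Icc_succ_top (by omega), ih, Nat.add_sub_cancel, hins,
      Finset.powersetCard_succ_insert hnot, Finset.sum_union, Finset.sum_image]
    · congr 1
      rw [Finset.mul_sum]
      refine Finset.sum_congr rfl fun A hA => ?_
      rw [Finset.prod_insert (fun h => hnot ((Finset.mem_powersetCard.1 hA).1 h))]
    · intro A hA B hB h
      have : (insert (m+1) A).erase (m+1) = (insert (m+1) B).erase (m+1) := by rw [h]
      rwa [Finset.erase_insert (fun h => hnot ((Finset.mem_powersetCard.1 hA).1 h)),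
        Finset.erase_insert (fun h => hnot ((Finset.mem_powersetCard.1 hB).1 h))] at this
    · refine Finset.disjoint_left.2 fun A hA hA' => ?_
      obtain ⟨B, hB, rfl⟩ := Finset.mem_image.1 hA'
      exact hnot ((Finset.mem_powersetCard.1 hA).1 (Finset.mem_insert_self _ _))

lemma zrev_replicate (q : ℂ) : ∀ (r m : ℕ),
    zrev q m (List.replicate r 1)
      = ∑ A ∈ (Icc 1 m).powersetCard r, ∏ k ∈ A, (qnum q k)⁻¹ := by
  intro r
  induction r with
  | zero => intro m; simp [zrev]
  | succ r ih =>
    intro m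
    show (∑ k ∈ Icc 1 m, q ^ ((1-1)*k) / qnum q k ^ 1 * zrev q (k - 1) (List.replicate r 1)) = _
    rw [← sum_step (fun k => (qnum q k)⁻¹) r m]
    refine Finset.sum_congr rfl fun k _ => ?_
    rw [ih]
    simp [one_div]

lemma key_poly (m : ℕ) (ζ : ℂ) (hζ : IsPrimitiveRoot ζ (m+1)) :
    ∏ k ∈ Icc 1 m, (X + C (1 - ζ ^ k)) = ∑ i ∈ range (m+1), (X + 1 : ℂ[X]) ^ i := by
  have h1 : (X : ℂ[X]) ^ (m+1) - C 1 = ∏ i ∈ range (m+1), (X - C (ζ ^ i * 1)) :=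
    X_pow_sub_C_eq_prod hζ m.succ_pos (one_pow _)
  have h2 := congrArg (aeval (X + 1 : ℂ[X])) h1
  simp only [map_sub, map_pow, aeval_X, aeval_C, map_prod, map_add, map_one, mul_one] at h2
  -- h2 : (X+1)^(m+1) - algebraMap _ _ 1 = ∏ i ∈ range (m+1), ((X+1) - algebraMap _ _ (ζ^i))
  rw [Finset.prod_range_succ'] at h2
  have h3 : ((X : ℂ[X]) + 1 - algebraMap ℂ ℂ[X] ζ ^ 0) = X := by
    simp
  rw [h3] at h2
  have h4 : (∑ i ∈ range (m+1), (X + 1 : ℂ[X]) ^ i) * X = (X+1)^(m+1) - 1 := by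
    have := geom_sum_mul (X + 1 : ℂ[X]) (m+1)
    simpa using this
  apply mul_right_cancel₀ (X_ne_zero (R := ℂ))
  rw [h4, h2]
  congr 1
  rw [← Finset.Ico_add_one_right_eq_Icc, Finset.prod_Ico_eq_prod_range]
  refine Finset.prod_congr (by norm_num) fun i _ => ?_
  rw [algebraMap_eq, map_sub, C_1, ← map_pow]
  ring_nf

lemma prod_eq (m : ℕ) (ζ : ℂ) (hζ : IsPrimitiveRoot ζ (m+1)) :
    ∏ k ∈ Icc 1 m, (1 - ζ ^ k) = ((m : ℂ) + 1) := by
  have := congrArg (Polynomial.eval 0) (key_poly m ζ hζ)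
  simpa [Polynomial.eval_prod, Polynomial.eval_finset_sum] using this

lemma coeff_eq (m r : ℕ) (hr : r ≤ m) (ζ : ℂ) (hζ : IsPrimitiveRoot ζ (m+1)) :
    ∑ t ∈ (Icc 1 m).powersetCard (m - r), ∏ k ∈ t, (1 - ζ ^ k)
      = ((m+1).choose (r+1) : ℂ) := by
  have hcard : #(Icc 1 m) = m := by simp
  have h := Finset.prod_X_add_C_coeff (Icc 1 m) (fun k => 1 - ζ ^ k)
      (k := r) (by rw [hcard]; exact hr)
  rw [key_poly m ζ hζ, hcard] at h
  rw [← h, Polynomial.finset_sum_coeff]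
  simp only [Polynomial.coeff_X_add_one_pow]
  rw [← Nat.cast_sum]
  congr 1
  have hz : ∀ x ∈ range (m+1), x ∉ Icc r m → x.choose r = 0 := by
    intro x hx' hx
    simp only [mem_Icc, mem_range] at hx' hx
    exact Nat.choose_eq_zero_of_lt (by omega)
  rw [← Finset.sum_subset (s₁ := Icc r m) (fun x hx => by simp at hx ⊢; omega) hz]
  exact Nat.sum_Icc_choose m r

lemma compl_sum (m r : ℕ) (hr : r ≤ m) (f : ℕ → ℂ) (hf : ∀ k ∈ Icc 1 m, f k ≠ 0) :
    ∑ A ∈ (Icc 1 m).powersetCard r, ∏ k ∈ A, (f k)⁻¹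
      = (∑ B ∈ (Icc 1 m).powersetCard (m - r), ∏ k ∈ B, f k) / ∏ k ∈ Icc 1 m, f k := by
  have hcard : #(Icc 1 m) = m := by simp
  have hSne : ∏ k ∈ Icc 1 m, f k ≠ 0 := Finset.prod_ne_zero_iff.2 hf
  rw [Finset.sum_div]
  refine Finset.sum_nbij' (fun A => Icc 1 m \ A) (fun B => Icc 1 m \ B) ?_ ?_ ?_ ?_ ?_
  · intro A hA
    obtain ⟨hsub, hc⟩ := Finset.mem_powersetCard.1 hA
    exact Finset.mem_powersetCard.2 ⟨Finset.sdiff_subset, by rw [Finset.card_sdiff_of_subset hsub, hcard, hc]⟩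
  · intro B hB
    obtain ⟨hsub, hc⟩ := Finset.mem_powersetCard.1 hB
    refine Finset.mem_powersetCard.2 ⟨Finset.sdiff_subset, ?_⟩
    rw [Finset.card_sdiff_of_subset hsub, hcard, hc]
    omega
  · intro A hA
    exact Finset.sdiff_sdiff_eq_self (Finset.mem_powersetCard.1 hA).1
  · intro B hB
    exact Finset.sdiff_sdiff_eq_self (Finset.mem_powersetCard.1 hB).1
  · intro A hA
    have hsub := (Finset.mem_powersetCard.1 hA).1
    have hAne : ∏ k ∈ A, f k ≠ 0 :=
      Finset.prod_ne_zero_iff.2 fun k hk => hf k (hsub hk)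
    rw [Finset.prod_inv_distrib, eq_div_iff hSne, ← Finset.prod_sdiff hsub,
      mul_comm (∏ k ∈ Icc 1 m \ A, f k) (∏ k ∈ A, f k), ← mul_assoc,
      inv_mul_cancel₀ hAne, one_mul]

theorem stmt4 (n r : ℕ) (hn : 0 < n) (hr : r < n) (ζ : ℂ) (hζ : IsPrimitiveRoot ζ n) :
    z ζ n (List.replicate r 1)
      = (1 / (n : ℂ)) * (n.choose (r + 1) : ℂ) * (1 - ζ) ^ r := by
  obtain ⟨m, rfl⟩ : ∃ m, n = m + 1 := ⟨n - 1, by omega⟩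
  have hrm : r ≤ m := by omega
  unfold z
  rw [List.reverse_replicate, Nat.add_sub_cancel, zrev_replicate]
  rcases Nat.eq_zero_or_pos m with rfl | hm
  · obtain rfl : r = 0 := by omega
    norm_num
  · have hζ1 : ζ ≠ 1 := hζ.ne_one (by omega)
    have h1 : (1 : ℂ) - ζ ≠ 0 := sub_ne_zero.mpr (Ne.symm hζ1)
    have hk : ∀ k ∈ Icc 1 m, (1 : ℂ) - ζ ^ k ≠ 0 := by
      intro k hk
      simp only [mem_Icc] at hk
      exact sub_ne_zero.mpr (Ne.symm (hζ.pow_ne_one_of_pos_of_lt (by omega) (by omega)))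
    have hq : ∀ A ∈ (Icc 1 m).powersetCard r,
        ∏ k ∈ A, (qnum ζ k)⁻¹ = (1 - ζ) ^ r * ∏ k ∈ A, (1 - ζ ^ k)⁻¹ := by
      intro A hA
      obtain ⟨hsub, hc⟩ := Finset.mem_powersetCard.1 hA
      rw [← hc, ← Finset.prod_const, ← Finset.prod_mul_distrib]
      refine Finset.prod_congr rfl fun k hkA => ?_
      unfold qnum
      rw [inv_div, div_eq_mul_inv]
    rw [Finset.sum_congr rfl hq, ← Finset.mul_sum,
      compl_sum m r hrm _ hk, coeff_eq m r hrm ζ hζ, prod_eq m ζ hζ]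
    push_cast
    ring
end

section
/- For any n-th primitive root of unity ζ and any non-negative integer r with r < n, z_n({2}^r; ζ) = ((−1)^r/(n(r+1)))·C(n+r, 2r+1)·(1−ζ)^{2r}. -/
open Finset

open Polynomial

def dd (k r : ℕ) : ℕ := (k + r + 1).choose (2 * r + 1) + (k + r).choose (2 * r + 1)

def bb (n r : ℕ) : ℕ := (n + r + 1).choose (2 * r + 2) + (n + r).choose (2 * r + 2)

lemma choose_aux (m t : ℕ) :
    (m + 3).choose (t + 2) + m.choose (t + 2)
      = (m + 2).choose (t + 2) + (m + 1).choose (t + 2) + (m + 1).choose t + m.choose t := by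
  have h1 : (m + 3).choose (t + 2) = (m + 2).choose (t + 1) + (m + 2).choose (t + 2) :=
    Nat.choose_succ_succ _ _
  have h2 : (m + 2).choose (t + 1) = (m + 1).choose t + (m + 1).choose (t + 1) :=
    Nat.choose_succ_succ _ _
  have h3 : (m + 1).choose (t + 1) = m.choose t + m.choose (t + 1) :=
    Nat.choose_succ_succ _ _
  have h4 : (m + 1).choose (t + 2) = m.choose (t + 1) + m.choose (t + 2) :=
    Nat.choose_succ_succ _ _
  omega

lemma dd_rec (k r : ℕ) :
    dd (k + 2) (r + 1) + dd k (r + 1) = 2 * dd (k + 1) (r + 1) + dd (k + 1) r := by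
  simp only [dd]
  have h := choose_aux (k + r + 1) (2 * r + 1)
  have h' := choose_aux (k + r) (2 * r + 1)
  ring_nf at h h' ⊢
  omega

lemma dd_rec0 (k : ℕ) : dd (k + 2) 0 + dd k 0 = 2 * dd (k + 1) 0 := by
  simp [dd, Nat.choose_one_right]; omega

lemma dd_eq_zero {k r : ℕ} (h : k < r) : dd k r = 0 := by
  simp only [dd]
  rw [Nat.choose_eq_zero_of_lt (by omega), Nat.choose_eq_zero_of_lt (by omega)]

lemma bb_rec (n r : ℕ) : bb (n + 1) r = bb n r + dd n r := by
  simp only [bb, dd]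
  have h1 : (n + r + 2).choose (2 * r + 2)
      = (n + r + 1).choose (2 * r + 1) + (n + r + 1).choose (2 * r + 2) :=
    Nat.choose_succ_succ _ _
  have h2 : (n + r + 1).choose (2 * r + 2)
      = (n + r).choose (2 * r + 1) + (n + r).choose (2 * r + 2) :=
    Nat.choose_succ_succ _ _
  ring_nf at h1 h2 ⊢
  omega

lemma bb_diag (n : ℕ) : bb n n = 0 := by
  simp only [bb]
  rw [Nat.choose_eq_zero_of_lt (by omega), Nat.choose_eq_zero_of_lt (by omega)]

noncomputable def TT (w : ℂ) (m : ℕ) : ℂ :=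
  ∑ r ∈ range (m + 1), (dd m r : ℂ) * (1 - w) ^ (2 * r) * w ^ (m - r)

lemma sum_dd_ext (w : ℂ) (m N : ℕ) (h : m ≤ N) (g : ℕ → ℂ) :
    ∑ r ∈ range m, (dd m (r + 1) : ℂ) * g r = ∑ r ∈ range N, (dd m (r + 1) : ℂ) * g r :=
  Finset.sum_subset (Finset.range_subset_range.mpr h) (fun x _ hx' => by
    rw [dd_eq_zero (by simp only [mem_range, not_lt] at hx'; omega)]
    simp)

lemma TT_rec (w : ℂ) (k : ℕ) :
    TT w (k + 2) = (2 * w + (1 - w) ^ 2) * TT w (k + 1) - w ^ 2 * TT w k := by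
  set u : ℂ := (1 - w) ^ 2 with hu
  have peel : ∀ m : ℕ, TT w m
      = ∑ r ∈ range m, (dd m (r + 1) : ℂ) * (u ^ (r + 1) * w ^ (m - 1 - r))
        + (dd m 0 : ℂ) * w ^ m := by
    intro m
    rw [TT, Finset.sum_range_succ']
    congr 1
    · apply Finset.sum_congr rfl
      intro r hr
      rw [pow_mul, mul_assoc, ← hu, show m - (r + 1) = m - 1 - r from by omega]
    · simp
  rw [peel (k + 2)]
  simp only [show k + 2 - 1 = k + 1 by omega]
  have hA : w * TT w (k + 1)
      = ∑ r ∈ range (k + 2), (dd (k + 1) (r + 1) : ℂ) * (u ^ (r + 1) * w ^ (k + 1 - r))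
        + (dd (k + 1) 0 : ℂ) * w ^ (k + 2) := by
    rw [peel (k + 1), mul_add, Finset.mul_sum, ← sum_dd_ext w (k + 1) (k + 2) (by omega)]
    congr 1
    · apply Finset.sum_congr rfl
      intro r hr
      simp only [mem_range] at hr
      have e1 : k + 1 - 1 - r = k - r := by omega
      have e2 : k + 1 - r = (k - r) + 1 := by omega
      rw [e1, e2, pow_succ]
      ring
    · ring
  have hU : u * TT w (k + 1)
      = ∑ r ∈ range (k + 2), (dd (k + 1) r : ℂ) * (u ^ (r + 1) * w ^ (k + 1 - r)) := by
    rw [TT, Finset.mul_sum]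
    apply Finset.sum_congr rfl
    intro r hr
    rw [pow_mul, pow_succ]
    ring
  have hB : w ^ 2 * TT w k
      = ∑ r ∈ range (k + 2), (dd k (r + 1) : ℂ) * (u ^ (r + 1) * w ^ (k + 1 - r))
        + (dd k 0 : ℂ) * w ^ (k + 2) := by
    rw [peel k, mul_add, Finset.mul_sum, ← sum_dd_ext w k (k + 2) (by omega)]
    congr 1
    · apply Finset.sum_congr rfl
      intro r hr
      simp only [mem_range] at hr
      have e1 : k + 1 - r = (k - 1 - r) + 2 := by omega
      rw [e1, pow_add]
      ring
    · ring
  have main : ∑ r ∈ range (k + 2), (dd (k + 2) (r + 1) : ℂ) * (u ^ (r + 1) * w ^ (k + 1 - r))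
      + ∑ r ∈ range (k + 2), (dd k (r + 1) : ℂ) * (u ^ (r + 1) * w ^ (k + 1 - r))
      = 2 * (∑ r ∈ range (k + 2), (dd (k + 1) (r + 1) : ℂ) * (u ^ (r + 1) * w ^ (k + 1 - r)))
        + ∑ r ∈ range (k + 2), (dd (k + 1) r : ℂ) * (u ^ (r + 1) * w ^ (k + 1 - r)) := by
    rw [← Finset.sum_add_distrib, Finset.mul_sum, ← Finset.sum_add_distrib]
    apply Finset.sum_congr rfl
    intro r _
    have hc : ((dd (k + 2) (r + 1) : ℂ)) + (dd k (r + 1) : ℂ)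
        = 2 * (dd (k + 1) (r + 1) : ℂ) + (dd (k + 1) r : ℂ) := by
      exact_mod_cast congrArg (Nat.cast (R := ℂ)) (dd_rec k r)
    linear_combination (u ^ (r + 1) * w ^ (k + 1 - r)) * hc
  have bdry : ((dd (k + 2) 0 : ℂ)) + (dd k 0 : ℂ) = 2 * (dd (k + 1) 0 : ℂ) := by
    exact_mod_cast congrArg (Nat.cast (R := ℂ)) (dd_rec0 k)
  have expand : (2 * w + u) * TT w (k + 1) - w ^ 2 * TT w k
      = 2 * (w * TT w (k + 1)) + u * TT w (k + 1) - w ^ 2 * TT w k := by ring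
  rw [expand, hA, hU, hB]
  linear_combination main + w ^ (k + 2) * bdry

lemma Dlem (w : ℂ) : ∀ k, ∑ j ∈ range (2 * k + 1), w ^ j = TT w k := by
  have key : ∀ k, (∑ j ∈ range (2 * k + 1), w ^ j = TT w k)
      ∧ (∑ j ∈ range (2 * k + 3), w ^ j = TT w (k + 1)) := by
    intro k
    induction k with
    | zero =>
      constructor
      · norm_num [TT, dd]
      · norm_num [TT, dd, Finset.sum_range_succ]
        ring
    | succ k ih =>
      refine ⟨by rw [show 2 * (k + 1) + 1 = 2 * k + 3 by ring]; exact ih.2, ?_⟩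
      rw [show 2 * (k + 1) + 3 = 2 * k + 5 by ring, show k + 1 + 1 = k + 2 from rfl, TT_rec w k,
        ← ih.1, ← ih.2]
      rw [show 2 * k + 5 = (2 * k + 3) + 2 by ring, Finset.sum_range_succ, Finset.sum_range_succ,
        show 2 * k + 3 = (2 * k + 1) + 2 by ring, Finset.sum_range_succ, Finset.sum_range_succ]
      ring
  exact fun k => (key k).1

lemma Hlem (n : ℕ) (w : ℂ) :
    (∑ j ∈ range n, w ^ j) ^ 2
      = ∑ r ∈ range n, (bb n r : ℂ) * (1 - w) ^ (2 * r) * w ^ (n - 1 - r) := by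
  induction n with
  | zero => simp
  | succ n ih =>
    have step1 : ∑ r ∈ range (n + 1), (bb (n + 1) r : ℂ) * (1 - w) ^ (2 * r) * w ^ (n + 1 - 1 - r)
        = ∑ r ∈ range (n + 1), (bb n r : ℂ) * (1 - w) ^ (2 * r) * w ^ (n - r) + TT w n := by
      rw [TT, ← Finset.sum_add_distrib]
      apply Finset.sum_congr rfl
      intro r _
      rw [bb_rec]
      push_cast
      ring
    have step2 : ∑ r ∈ range (n + 1), (bb n r : ℂ) * (1 - w) ^ (2 * r) * w ^ (n - r)
        = w * (∑ j ∈ range n, w ^ j) ^ 2 := by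
      rw [Finset.sum_range_succ, bb_diag, ih, Finset.mul_sum]
      push_cast
      rw [zero_mul, zero_mul, add_zero]
      apply Finset.sum_congr rfl
      intro r hr
      simp only [mem_range] at hr
      rw [show n - r = (n - 1 - r) + 1 from by omega, pow_succ]
      ring
    rw [step1, step2, ← Dlem w n]
    have hsplit : ∑ j ∈ range (2 * n + 1), w ^ j
        = ∑ j ∈ range n, w ^ j + w ^ n * (∑ j ∈ range n, w ^ j) + w ^ (2 * n) := by
      have h2 : ∑ i ∈ range (n + 1), w ^ (n + i)
          = w ^ n * (∑ j ∈ range n, w ^ j) + w ^ (2 * n) := by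
        rw [Finset.sum_range_succ, Finset.mul_sum]
        congr 1
        · apply Finset.sum_congr rfl
          intro j _
          rw [pow_add]
        · rw [show n + n = 2 * n by ring]
      rw [show 2 * n + 1 = n + (n + 1) by ring, Finset.sum_range_add, h2]
      ring
    rw [Finset.sum_range_succ, hsplit]
    have hgeom : (∑ j ∈ range n, w ^ j) * (w - 1) = w ^ n - 1 := geom_sum_mul w n
    have h2n : w ^ (2 * n) = w ^ n * w ^ n := by rw [two_mul, pow_add]
    rw [h2n]
    linear_combination (-(∑ j ∈ range n, w ^ j)) * hgeom

/-- Nested elementary-symmetric-style sum of `a j = q^j/(1-q^j)^2`. -/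
noncomputable def Saux (q : ℂ) : ℕ → ℕ → ℂ
  | _, 0 => 1
  | m, r + 1 => ∑ k ∈ Finset.Icc 1 m, q ^ k / (1 - q ^ k) ^ 2 * Saux q (k - 1) r

lemma zrev_replicate_s5 (q : ℂ) : ∀ (r m : ℕ),
    zrev q m (List.replicate r 2) = (1 - q) ^ (2 * r) * Saux q m r := by
  intro r
  induction r with
  | zero => intro m; simp [zrev, Saux]
  | succ r ih =>
    intro m
    rw [List.replicate_succ]
    show (∑ k ∈ Finset.Icc 1 m, q ^ ((2 - 1) * k) / qnum q k ^ 2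
        * zrev q (k - 1) (List.replicate r 2)) = _
    rw [show Saux q m (r + 1)
        = ∑ k ∈ Finset.Icc 1 m, q ^ k / (1 - q ^ k) ^ 2 * Saux q (k - 1) r from rfl,
      Finset.mul_sum]
    apply Finset.sum_congr rfl
    intro k _
    rw [ih (k - 1), show (2 - 1) * k = k by omega, qnum, div_pow, div_div_eq_mul_div,
      show 2 * (r + 1) = 2 * r + 2 by ring, pow_add]
    ring

lemma Saux_zero (q : ℂ) (m : ℕ) : Saux q m 0 = 1 := rfl

lemma Saux_succ (q : ℂ) (m r : ℕ) :
    Saux q m (r + 1) = ∑ k ∈ Finset.Icc 1 m, q ^ k / (1 - q ^ k) ^ 2 * Saux q (k - 1) r := rfl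

lemma Saux_eq_zero (q : ℂ) : ∀ (r m : ℕ), m < r → Saux q m r = 0 := by
  intro r
  induction r with
  | zero => intro m h; omega
  | succ r ih =>
    intro m h
    rw [Saux_succ]
    apply Finset.sum_eq_zero
    intro k hk
    simp only [mem_Icc] at hk
    rw [ih (k - 1) (by omega), mul_zero]

lemma Saux_pascal (q : ℂ) (m r : ℕ) :
    Saux q (m + 1) (r + 1)
      = Saux q m (r + 1) + q ^ (m + 1) / (1 - q ^ (m + 1)) ^ 2 * Saux q m r := by
  rw [Saux_succ, Saux_succ, Finset.sum_Icc_succ_top (by omega)]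
  simp

lemma Saux_gen (q : ℂ) : ∀ (m : ℕ) (x : ℂ),
    ∑ r ∈ range (m + 1), Saux q m r * x ^ r
      = ∏ k ∈ Finset.Icc 1 m, (1 + q ^ k / (1 - q ^ k) ^ 2 * x) := by
  intro m
  induction m with
  | zero => intro x; simp [Saux_zero]
  | succ m ih =>
    intro x
    rw [Finset.prod_Icc_succ_top (by omega), ← ih x]
    rw [Finset.sum_range_succ']
    simp only [Saux_pascal, Saux_zero, pow_zero, mul_one]
    have e1 : ∑ r ∈ range (m + 1),
        (Saux q m (r + 1) + q ^ (m + 1) / (1 - q ^ (m + 1)) ^ 2 * Saux q m r) * x ^ (r + 1)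
        = (∑ r ∈ range (m + 1), Saux q m (r + 1) * x ^ (r + 1))
          + q ^ (m + 1) / (1 - q ^ (m + 1)) ^ 2 * x
            * ∑ r ∈ range (m + 1), Saux q m r * x ^ r := by
      rw [Finset.mul_sum, ← Finset.sum_add_distrib]
      apply Finset.sum_congr rfl
      intro r _
      rw [pow_succ]
      ring
    rw [e1]
    have e2 : ∑ r ∈ range (m + 1), Saux q m (r + 1) * x ^ (r + 1)
        = (∑ r ∈ range (m + 1), Saux q m r * x ^ r) - 1 := by
      have e3 : ∑ r ∈ range (m + 2), Saux q m r * x ^ r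
          = ∑ r ∈ range (m + 1), Saux q m r * x ^ r := by
        rw [Finset.sum_range_succ, Saux_eq_zero q (m + 1) m (by omega)]
        simp
      rw [← e3, Finset.sum_range_succ' (fun r => Saux q m r * x ^ r) (m + 1)]
      simp [Saux_zero]
    rw [e2]
    ring

lemma KP {n : ℕ} (hn : 0 < n) {ζ : ℂ} (hζ : IsPrimitiveRoot ζ n) :
    ∏ k ∈ Finset.Icc 1 (n - 1), (X - C (ζ ^ k)) = ∑ j ∈ range n, (X : ℂ[X]) ^ j := by
  have hprod : (X : ℂ[X]) ^ n - C 1 = ∏ i ∈ Finset.range n, (X - C (ζ ^ i * 1)) :=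
    X_pow_sub_C_eq_prod hζ hn (one_pow n)
  simp only [mul_one] at hprod
  have hsplit : ∏ i ∈ Finset.range n, (X - C (ζ ^ i))
      = (X - C (ζ ^ 0)) * ∏ k ∈ Finset.Icc 1 (n - 1), (X - C (ζ ^ k)) := by
    have e : Finset.Ico 1 n = Finset.Icc 1 (n - 1) := by
      rw [← Finset.Ico_add_one_right_eq_Icc]
      congr 1
      omega
    rw [Finset.range_eq_Ico, Finset.prod_eq_prod_Ico_succ_bot hn, e]
  have hgeom : ((X : ℂ[X]) - C 1) * ∑ j ∈ range n, (X : ℂ[X]) ^ j = X ^ n - C 1 := by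
    have := geom_sum_mul (X : ℂ[X]) n
    rw [mul_comm] at this
    simpa using this
  apply mul_left_cancel₀ (X_sub_C_ne_zero (1 : ℂ))
  rw [hgeom, hprod, hsplit]
  simp

lemma prod_sub_pow {n : ℕ} (hn : 0 < n) {ζ : ℂ} (hζ : IsPrimitiveRoot ζ n) (y : ℂ) :
    ∏ k ∈ Finset.Icc 1 (n - 1), (y - ζ ^ k) = ∑ j ∈ range n, y ^ j := by
  have := congrArg (Polynomial.eval y) (KP hn hζ)
  simpa [Polynomial.eval_prod, Polynomial.eval_finset_sum] using this

lemma prod_one_sub {n : ℕ} (hn : 0 < n) {ζ : ℂ} (hζ : IsPrimitiveRoot ζ n) :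
    ∏ k ∈ Finset.Icc 1 (n - 1), (1 - ζ ^ k) = (n : ℂ) := by
  have := prod_sub_pow hn hζ 1
  simpa using this

lemma prod_one_sub_mul {n : ℕ} (hn : 0 < n) {ζ : ℂ} (hζ : IsPrimitiveRoot ζ n)
    {w : ℂ} (hw : w ≠ 0) :
    ∏ k ∈ Finset.Icc 1 (n - 1), (1 - w * ζ ^ k) = ∑ j ∈ range n, w ^ j := by
  have card_Icc : (Finset.Icc 1 (n - 1)).card = n - 1 := by
    rw [Nat.card_Icc]; omega
  have step1 : ∏ k ∈ Finset.Icc 1 (n - 1), (1 - w * ζ ^ k)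
      = ∏ k ∈ Finset.Icc 1 (n - 1), (w * (w⁻¹ - ζ ^ k)) := by
    apply Finset.prod_congr rfl
    intro k _
    rw [mul_sub, mul_inv_cancel₀ hw]
  rw [step1, Finset.prod_mul_distrib, Finset.prod_const, card_Icc, prod_sub_pow hn hζ w⁻¹,
    Finset.mul_sum]
  rw [← Finset.sum_range_reflect (fun j => w ^ j) n]
  apply Finset.sum_congr rfl
  intro j hj
  simp only [mem_range] at hj
  rw [inv_pow, ← pow_sub₀ w hw (by omega : j ≤ n - 1)]

/-- The full evaluation chain at `x = -(1-w)^2/w`. -/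
lemma chain {n : ℕ} (hn : 0 < n) {ζ : ℂ} (hζ : IsPrimitiveRoot ζ n)
    {w : ℂ} (hw0 : w ≠ 0) :
    ∑ r ∈ range n, Saux ζ (n - 1) r * (-(1 - w) ^ 2 / w) ^ r
      = ∑ r ∈ range n, ((-1) ^ r * (bb n r : ℂ) / (n : ℂ) ^ 2) * (-(1 - w) ^ 2 / w) ^ r := by
  set x : ℂ := -(1 - w) ^ 2 / w with hx
  have hζk : ∀ k ∈ Finset.Icc 1 (n - 1), (1 : ℂ) - ζ ^ k ≠ 0 := by
    intro k hk
    simp only [mem_Icc] at hk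
    have := hζ.pow_ne_one_of_pos_of_lt (by omega : k ≠ 0) (by omega : k < n)
    intro h
    exact this (by linear_combination -h)
  have hn0 : (n : ℂ) ≠ 0 := Nat.cast_ne_zero.mpr (by omega)
  have card_Icc : (Finset.Icc 1 (n - 1)).card = n - 1 := by rw [Nat.card_Icc]; omega
  -- step 1 : generating function
  have h1 : ∑ r ∈ range n, Saux ζ (n - 1) r * x ^ r
      = ∏ k ∈ Finset.Icc 1 (n - 1), (1 + ζ ^ k / (1 - ζ ^ k) ^ 2 * x) := by
    have := Saux_gen ζ (n - 1) x
    rwa [show n - 1 + 1 = n by omega] at this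
  -- step 2 : product evaluation
  have h2 : ∏ k ∈ Finset.Icc 1 (n - 1), (1 + ζ ^ k / (1 - ζ ^ k) ^ 2 * x)
      = (∑ j ∈ range n, w ^ j) ^ 2 / (w ^ (n - 1) * (n : ℂ) ^ 2) := by
    have hfac : ∀ k ∈ Finset.Icc 1 (n - 1),
        1 + ζ ^ k / (1 - ζ ^ k) ^ 2 * x
          = ((w - ζ ^ k) * (1 - w * ζ ^ k)) / (w * (1 - ζ ^ k) ^ 2) := by
      intro k hk
      have h0 := hζk k hk
      rw [hx]
      field_simp
      ring
    rw [Finset.prod_congr rfl hfac, Finset.prod_div_distrib, Finset.prod_mul_distrib,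
      Finset.prod_mul_distrib, Finset.prod_const, card_Icc, Finset.prod_pow,
      prod_sub_pow hn hζ w, prod_one_sub_mul hn hζ hw0, prod_one_sub hn hζ]
    ring
  -- step 3 : Hlem rewrite
  have h3 : (∑ j ∈ range n, w ^ j) ^ 2 / (w ^ (n - 1) * (n : ℂ) ^ 2)
      = ∑ r ∈ range n, ((-1) ^ r * (bb n r : ℂ) / (n : ℂ) ^ 2) * x ^ r := by
    rw [Hlem n w, Finset.sum_div]
    apply Finset.sum_congr rfl
    intro r hr
    simp only [mem_range] at hr
    have hpow : w ^ (n - 1) = w ^ (n - 1 - r) * w ^ r := by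
      rw [← pow_add]
      congr 1
      omega
    have hxr : x ^ r = (-1) ^ r * ((1 - w) ^ (2 * r) / w ^ r) := by
      rw [hx, neg_div, neg_pow, div_pow, ← pow_mul]
    rw [hpow, hxr]
    have hwr : w ^ r ≠ 0 := pow_ne_zero _ hw0
    have hwnr : w ^ (n - 1 - r) ≠ 0 := pow_ne_zero _ hw0
    have hsq : ((-1 : ℂ)) ^ r * (-1) ^ r = 1 := by
      rw [← mul_pow]
      norm_num
    have hneg : ((-1 : ℂ)) ^ (r * 2) = 1 := by
      rw [pow_mul, sq]
      exact hsq
    field_simp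
    ring_nf
    rw [hneg]
    ring
  rw [h1, h2, h3]

lemma bb_choose {n r : ℕ} (h : r < n) :
    (r + 1) * bb n r = n * (n + r).choose (2 * r + 1) := by
  have h1 : (n + r + 1).choose (2 * r + 2)
      = (n + r).choose (2 * r + 1) + (n + r).choose (2 * r + 2) :=
    Nat.choose_succ_succ _ _
  have h2 : (n + r).choose (2 * r + 2) * (2 * r + 2)
      = (n + r).choose (2 * r + 1) * (n + r - (2 * r + 1)) := by
    have := Nat.choose_succ_right_eq (n + r) (2 * r + 1)
    convert this using 2
  set A := (n + r).choose (2 * r + 1) with hA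
  set B := (n + r).choose (2 * r + 2) with hB
  have hsub : n + r - (2 * r + 1) = n - r - 1 := by omega
  rw [hsub] at h2
  have hbb : bb n r = A + 2 * B := by
    rw [bb, h1]
    omega
  rw [hbb]
  have expand : (r + 1) * (A + 2 * B) = (r + 1) * A + (B * (2 * r + 2)) := by ring
  rw [expand, h2]
  have : (r + 1) * A + A * (n - r - 1) = A * ((r + 1) + (n - r - 1)) := by ring
  rw [this, show (r + 1) + (n - r - 1) = n by omega]
  ring

-- injective real family
noncomputable def xseq (m : ℕ) : ℂ := -(1 - ((m : ℂ) + 2)) ^ 2 / ((m : ℂ) + 2)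

lemma xseq_inj : Function.Injective xseq := by
  have hre : ∀ m : ℕ, xseq m = ((-(((m : ℝ) + 1) ^ 2 / ((m : ℝ) + 2)) : ℝ) : ℂ) := by
    intro m
    rw [xseq]
    push_cast
    have h2 : ((m : ℂ) + 2) ≠ 0 := by
      have h3 : ((m + 2 : ℕ) : ℂ) ≠ 0 := Nat.cast_ne_zero.mpr (by omega)
      push_cast at h3
      exact h3
    rw [neg_div]
    congr 2
    ring
  intro a b hab
  rw [hre a, hre b, Complex.ofReal_inj] at hab
  by_contra hne
  wlog hlt : a < b generalizing a b
  · exact this hab.symm (Ne.symm hne) (by omega)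
  have hlt' : ((a : ℝ) + 1) ^ 2 / ((a : ℝ) + 2) < ((b : ℝ) + 1) ^ 2 / ((b : ℝ) + 2) := by
    rw [div_lt_div_iff₀ (by positivity) (by positivity)]
    have hab' : (a : ℝ) < (b : ℝ) := by exact_mod_cast hlt
    nlinarith [mul_pos (sub_pos.2 hab')
      (show (0 : ℝ) < (a : ℝ) * b + 2 * a + 2 * b + 3 by positivity)]
  rw [neg_inj] at hab
  rw [hab] at hlt'
  exact lt_irrefl _ hlt'



theorem stmt5 (n r : ℕ) (hn : 0 < n) (hr : r < n) (ζ : ℂ) (hζ : IsPrimitiveRoot ζ n) :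
    z ζ n (List.replicate r 2)
      = (-1) ^ r / ((n : ℂ) * (r + 1)) * ((n + r).choose (2 * r + 1) : ℂ)
          * (1 - ζ) ^ (2 * r) := by
  -- coefficient identification via infinitely many roots
  have hw0 : ∀ m : ℕ, ((m : ℂ) + 2) ≠ 0 := by
    intro m
    have h3 : ((m + 2 : ℕ) : ℂ) ≠ 0 := Nat.cast_ne_zero.mpr (by omega)
    push_cast at h3
    exact h3
  set p : ℂ[X] := ∑ i ∈ range n,
    C (Saux ζ (n - 1) i - (-1) ^ i * (bb n i : ℂ) / (n : ℂ) ^ 2) * X ^ i with hp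
  have hroot : ∀ m : ℕ, p.IsRoot (xseq m) := by
    intro m
    have hc := chain hn hζ (hw0 m)
    rw [IsRoot, hp, eval_finset_sum]
    simp only [eval_mul, eval_C, eval_pow, eval_X]
    rw [← sub_eq_zero] at hc
    rw [← Finset.sum_sub_distrib] at hc
    rw [← hc]
    apply Finset.sum_congr rfl
    intro i _
    simp only [xseq]
    ring
  have hpz : p = 0 := by
    apply Polynomial.eq_zero_of_infinite_isRoot
    apply Set.infinite_of_injective_forall_mem xseq_inj
    exact fun m => hroot m
  have hcoeff : Saux ζ (n - 1) r = (-1) ^ r * (bb n r : ℂ) / (n : ℂ) ^ 2 := by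
    have := congrArg (fun q : ℂ[X] => q.coeff r) hpz
    simp only [hp, finset_sum_coeff, coeff_C_mul, coeff_X_pow, coeff_zero, mul_ite, mul_one,
      mul_zero] at this
    rw [Finset.sum_ite_eq (range n) r
      (fun i => Saux ζ (n - 1) i - (-1) ^ i * (bb n i : ℂ) / (n : ℂ) ^ 2)] at this
    rw [if_pos (mem_range.mpr hr)] at this
    linear_combination this
  have hn0 : (n : ℂ) ≠ 0 := Nat.cast_ne_zero.mpr (by omega)
  have hr0 : ((r : ℂ) + 1) ≠ 0 := Nat.cast_add_one_ne_zero r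
  have hnat : ((r : ℂ) + 1) * (bb n r : ℂ) = (n : ℂ) * ((n + r).choose (2 * r + 1) : ℂ) := by
    exact_mod_cast congrArg (Nat.cast (R := ℂ)) (bb_choose hr)
  have key : (-1) ^ r * (bb n r : ℂ) / (n : ℂ) ^ 2
      = (-1) ^ r / ((n : ℂ) * ((r : ℂ) + 1)) * ((n + r).choose (2 * r + 1) : ℂ) := by
    rw [div_mul_eq_mul_div, div_eq_div_iff (pow_ne_zero 2 hn0) (mul_ne_zero hn0 hr0)]
    linear_combination ((-1 : ℂ) ^ r * (n : ℂ)) * hnat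
  rw [z, List.reverse_replicate, zrev_replicate_s5, hcoeff, key]
  ring
end

section
/- For any n-th primitive root of unity ζ and any non-negative integer r with 3r+2 < n suitably, z_n({3}^r; ζ) = (1/(n^2(r+1)))·(C(n+2r+1, 3r+2) + (−1)^r·C(n+r, 3r+2))·(1−ζ)^{3r}. -/
open Finset

/-! ### Pascal rule and binomial identities -/

lemma pas (N k : ℕ) : (N+1).choose (k+1) = N.choose k + N.choose (k+1) := Nat.choose_succ_succ N k

noncomputable def ca (m : ℕ) : ℕ → ℂ
  | 0 => 3
  | r+1 => 3 * ((m+2*r+1).choose (3*r+3) : ℂ) + ((m+2*r+1).choose (3*r+2) : ℂ)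

noncomputable def cb (m : ℕ) : ℕ → ℂ
  | 0 => 3
  | r+1 => (-1)^(r+1) * (3 * ((m+r).choose (3*r+3) : ℂ) + 2 * ((m+r).choose (3*r+2) : ℂ))

noncomputable def sh (f : ℕ → ℂ) : ℕ → ℂ
  | 0 => 0
  | r+1 => f r

lemma ca_vanish (m r : ℕ) (h : m < r) : ca m r = 0 := by
  match r with
  | 0 => omega
  | s+1 =>
    have h1 : m+2*s+1 < 3*s+2 := by omega
    simp [ca, Nat.choose_eq_zero_of_lt h1, Nat.choose_eq_zero_of_lt (by omega : m+2*s+1 < 3*s+3)]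

lemma cb_vanish (m r : ℕ) (h : m < r) : cb m r = 0 := by
  match r with
  | 0 => omega
  | s+1 =>
    have h1 : m+s < 3*s+2 := by omega
    simp [cb, Nat.choose_eq_zero_of_lt h1, Nat.choose_eq_zero_of_lt (by omega : m+s < 3*s+3)]

lemma NA1 (m : ℕ) : 3*((m+4).choose 3) + (m+4).choose 2 + 3*(3*((m+2).choose 3) + (m+2).choose 2)
    = 3*(3*((m+3).choose 3) + (m+3).choose 2) + 3 + (3*((m+1).choose 3) + (m+1).choose 2) := by
  have h1 : (m+4).choose 3 = (m+3).choose 2 + (m+3).choose 3 := pas (m+3) 2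
  have h2 : (m+4).choose 2 = (m+3).choose 1 + (m+3).choose 2 := pas (m+3) 1
  have h3 : (m+3).choose 3 = (m+2).choose 2 + (m+2).choose 3 := pas (m+2) 2
  have h4 : (m+3).choose 2 = (m+2).choose 1 + (m+2).choose 2 := pas (m+2) 1
  have h5 : (m+3).choose 1 = (m+2).choose 0 + (m+2).choose 1 := pas (m+2) 0
  have h6 : (m+2).choose 3 = (m+1).choose 2 + (m+1).choose 3 := pas (m+1) 2
  have h7 : (m+2).choose 2 = (m+1).choose 1 + (m+1).choose 2 := pas (m+1) 1
  have h8 : (m+2).choose 1 = (m+1).choose 0 + (m+1).choose 1 := pas (m+1) 0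
  have h9 : (m+2).choose 0 = 1 := Nat.choose_zero_right _
  have h10 : (m+1).choose 0 = 1 := Nat.choose_zero_right _
  omega

lemma NA2 (L u : ℕ) :
    3*((L+6).choose (3*u+6)) + (L+6).choose (3*u+5)
      + 3*(3*((L+4).choose (3*u+6)) + (L+4).choose (3*u+5))
    = 3*(3*((L+5).choose (3*u+6)) + (L+5).choose (3*u+5))
      + (3*((L+3).choose (3*u+3)) + (L+3).choose (3*u+2))
      + (3*((L+3).choose (3*u+6)) + (L+3).choose (3*u+5)) := by
  have e1 : (L+6).choose (3*u+6) = (L+5).choose (3*u+5) + (L+5).choose (3*u+6) := pas (L+5) (3*u+5)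
  have e2 : (L+6).choose (3*u+5) = (L+5).choose (3*u+4) + (L+5).choose (3*u+5) := pas (L+5) (3*u+4)
  have e3 : (L+5).choose (3*u+6) = (L+4).choose (3*u+5) + (L+4).choose (3*u+6) := pas (L+4) (3*u+5)
  have e4 : (L+5).choose (3*u+5) = (L+4).choose (3*u+4) + (L+4).choose (3*u+5) := pas (L+4) (3*u+4)
  have e5 : (L+5).choose (3*u+4) = (L+4).choose (3*u+3) + (L+4).choose (3*u+4) := pas (L+4) (3*u+3)
  have e6 : (L+4).choose (3*u+6) = (L+3).choose (3*u+5) + (L+3).choose (3*u+6) := pas (L+3) (3*u+5)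
  have e7 : (L+4).choose (3*u+5) = (L+3).choose (3*u+4) + (L+3).choose (3*u+5) := pas (L+3) (3*u+4)
  have e8 : (L+4).choose (3*u+4) = (L+3).choose (3*u+3) + (L+3).choose (3*u+4) := pas (L+3) (3*u+3)
  have e9 : (L+4).choose (3*u+3) = (L+3).choose (3*u+2) + (L+3).choose (3*u+3) := pas (L+3) (3*u+2)
  omega

lemma NB1 (m : ℕ) : 3*((m+3).choose 3) + 2*((m+3).choose 2) + 3*(3*((m+1).choose 3) + 2*((m+1).choose 2))
    = 3*(3*((m+2).choose 3) + 2*((m+2).choose 2)) + 3 + (3*(m.choose 3) + 2*(m.choose 2)) := by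
  have h1 : (m+3).choose 3 = (m+2).choose 2 + (m+2).choose 3 := pas (m+2) 2
  have h2 : (m+3).choose 2 = (m+2).choose 1 + (m+2).choose 2 := pas (m+2) 1
  have h3 : (m+2).choose 3 = (m+1).choose 2 + (m+1).choose 3 := pas (m+1) 2
  have h4 : (m+2).choose 2 = (m+1).choose 1 + (m+1).choose 2 := pas (m+1) 1
  have h5 : (m+2).choose 1 = (m+1).choose 0 + (m+1).choose 1 := pas (m+1) 0
  have h6 : (m+1).choose 3 = m.choose 2 + m.choose 3 := pas m 2
  have h7 : (m+1).choose 2 = m.choose 1 + m.choose 2 := pas m 1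
  have h8 : (m+1).choose 1 = m.choose 0 + m.choose 1 := pas m 0
  have h9 : (m+1).choose 0 = 1 := Nat.choose_zero_right _
  have h10 : m.choose 0 = 1 := Nat.choose_zero_right _
  omega

lemma NB2 (M v : ℕ) :
    3*((M+4).choose (3*v+6)) + 2*((M+4).choose (3*v+5))
      + 3*(3*((M+2).choose (3*v+6)) + 2*((M+2).choose (3*v+5)))
    = 3*(3*((M+3).choose (3*v+6)) + 2*((M+3).choose (3*v+5)))
      + (3*((M+1).choose (3*v+3)) + 2*((M+1).choose (3*v+2)))
      + (3*((M+1).choose (3*v+6)) + 2*((M+1).choose (3*v+5))) := by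
  have e1 : (M+4).choose (3*v+6) = (M+3).choose (3*v+5) + (M+3).choose (3*v+6) := pas (M+3) (3*v+5)
  have e2 : (M+4).choose (3*v+5) = (M+3).choose (3*v+4) + (M+3).choose (3*v+5) := pas (M+3) (3*v+4)
  have e3 : (M+3).choose (3*v+6) = (M+2).choose (3*v+5) + (M+2).choose (3*v+6) := pas (M+2) (3*v+5)
  have e4 : (M+3).choose (3*v+5) = (M+2).choose (3*v+4) + (M+2).choose (3*v+5) := pas (M+2) (3*v+4)
  have e5 : (M+3).choose (3*v+4) = (M+2).choose (3*v+3) + (M+2).choose (3*v+4) := pas (M+2) (3*v+3)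
  have e6 : (M+2).choose (3*v+6) = (M+1).choose (3*v+5) + (M+1).choose (3*v+6) := pas (M+1) (3*v+5)
  have e7 : (M+2).choose (3*v+5) = (M+1).choose (3*v+4) + (M+1).choose (3*v+5) := pas (M+1) (3*v+4)
  have e8 : (M+2).choose (3*v+4) = (M+1).choose (3*v+3) + (M+1).choose (3*v+4) := pas (M+1) (3*v+3)
  have e9 : (M+2).choose (3*v+3) = (M+1).choose (3*v+2) + (M+1).choose (3*v+3) := pas (M+1) (3*v+2)
  omega

lemma ca_rec (m r : ℕ) :
    ca (m+3) r = 3 * ca (m+2) r + sh (ca (m+2)) r - 3 * ca (m+1) r + ca m r := by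
  match r with
  | 0 => norm_num [ca, sh]
  | 1 =>
    have h := congrArg (fun t : ℕ => (t : ℂ)) (NA1 m)
    simp only [ca, sh]
    push_cast at h
    push_cast
    norm_num
    linear_combination h
  | (u+2) =>
    have h := congrArg (fun t : ℕ => (t : ℂ)) (NA2 (m+2*u) u)
    simp only [ca, sh]
    have a1 : m+3+2*(u+1)+1 = m+2*u+6 := by ring
    have a2 : m+2+2*(u+1)+1 = m+2*u+5 := by ring
    have a3 : m+1+2*(u+1)+1 = m+2*u+4 := by ring
    have a4 : m+2*(u+1)+1 = m+2*u+3 := by ring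
    have a5 : m+2+2*u+1 = m+2*u+3 := by ring
    have a6 : 3*(u+1)+3 = 3*u+6 := by ring
    have a7 : 3*(u+1)+2 = 3*u+5 := by ring
    rw [a1, a2, a3, a4, a5, a6, a7]
    push_cast at h
    linear_combination h

lemma cb_rec (m r : ℕ) :
    cb (m+3) r = 3 * cb (m+2) r - 3 * cb (m+1) r - sh (cb (m+1)) r + cb m r := by
  match r with
  | 0 => norm_num [cb, sh]
  | 1 =>
    have h := congrArg (fun t : ℕ => (t : ℂ)) (NB1 m)
    simp only [cb, sh]
    push_cast at h
    push_cast
    norm_num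
    linear_combination -h
  | (u+2) =>
    have h := congrArg (fun t : ℕ => (t : ℂ)) (NB2 (m+u) u)
    simp only [cb, sh]
    have a1 : m+3+(u+1) = m+u+4 := by ring
    have a2 : m+2+(u+1) = m+u+3 := by ring
    have a3 : m+1+(u+1) = m+u+2 := by ring
    have a4 : m+(u+1) = m+u+1 := by ring
    have a5 : m+1+u = m+u+1 := by ring
    have a6 : 3*(u+1)+3 = 3*u+6 := by ring
    have a7 : 3*(u+1)+2 = 3*u+5 := by ring
    rw [a1, a2, a3, a4, a5, a6, a7]
    push_cast at h
    linear_combination ((-1:ℂ))^(u+2) * h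

/-! ### Summed recurrences -/

lemma shift_sum (c : ℂ) (f : ℕ → ℂ) (K : ℕ) (htop : f K = 0) :
    ∑ r ∈ range (K+1), sh f r * c^r = c * ∑ r ∈ range (K+1), f r * c^r := by
  rw [Finset.sum_range_succ' (fun r => sh f r * c^r) K]
  rw [Finset.sum_range_succ (fun r => f r * c^r) K]
  simp only [sh, htop, pow_zero, mul_one, zero_mul, add_zero, mul_zero]
  rw [Finset.mul_sum]
  apply Finset.sum_congr rfl
  intros; ring

lemma pad_sum (c : ℂ) (f : ℕ → ℂ) (M K : ℕ) (h : M ≤ K) (hv : ∀ r, M < r → f r = 0) :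
    ∑ r ∈ range (M+1), f r * c^r = ∑ r ∈ range (K+1), f r * c^r := by
  apply Finset.sum_subset
  · exact Finset.range_subset_range.mpr (by omega)
  · intro x hx hnx
    simp only [Finset.mem_range] at hx hnx
    rw [hv x (by omega), zero_mul]

noncomputable def Sa (c : ℂ) (m : ℕ) : ℂ := ∑ r ∈ range (m+1), ca m r * c^r
noncomputable def Sb (c : ℂ) (m : ℕ) : ℂ := ∑ r ∈ range (m+1), cb m r * c^r

lemma Sa_rec (c : ℂ) (m : ℕ) : Sa c (m+3) = (3+c) * Sa c (m+2) - 3 * Sa c (m+1) + Sa c m := by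
  have P2 : Sa c (m+2) = ∑ r ∈ range (m+4), ca (m+2) r * c^r :=
    pad_sum c _ (m+2) (m+3) (by omega) (fun r hr => ca_vanish _ _ hr)
  have P1 : Sa c (m+1) = ∑ r ∈ range (m+4), ca (m+1) r * c^r :=
    pad_sum c _ (m+1) (m+3) (by omega) (fun r hr => ca_vanish _ _ (by omega))
  have P0 : Sa c m = ∑ r ∈ range (m+4), ca m r * c^r :=
    pad_sum c _ m (m+3) (by omega) (fun r hr => ca_vanish _ _ (by omega))
  have hshift : ∑ r ∈ range (m+4), sh (ca (m+2)) r * c^r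
      = c * ∑ r ∈ range (m+4), ca (m+2) r * c^r :=
    shift_sum c _ (m+3) (ca_vanish _ _ (by omega))
  have hmain : Sa c (m+3) = ∑ r ∈ range (m+4),
      (3 * (ca (m+2) r * c^r) + sh (ca (m+2)) r * c^r - 3 * (ca (m+1) r * c^r) + ca m r * c^r) := by
    unfold Sa
    apply Finset.sum_congr rfl
    intro r _
    rw [ca_rec m r]; ring
  rw [hmain, P2, P1, P0]
  rw [Finset.sum_add_distrib, Finset.sum_sub_distrib, Finset.sum_add_distrib, hshift]
  rw [← Finset.mul_sum, ← Finset.mul_sum]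
  ring

lemma Sb_rec (c : ℂ) (m : ℕ) : Sb c (m+3) = 3 * Sb c (m+2) - (3+c) * Sb c (m+1) + Sb c m := by
  have P2 : Sb c (m+2) = ∑ r ∈ range (m+4), cb (m+2) r * c^r :=
    pad_sum c _ (m+2) (m+3) (by omega) (fun r hr => cb_vanish _ _ hr)
  have P1 : Sb c (m+1) = ∑ r ∈ range (m+4), cb (m+1) r * c^r :=
    pad_sum c _ (m+1) (m+3) (by omega) (fun r hr => cb_vanish _ _ (by omega))
  have P0 : Sb c m = ∑ r ∈ range (m+4), cb m r * c^r :=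
    pad_sum c _ m (m+3) (by omega) (fun r hr => cb_vanish _ _ (by omega))
  have hshift : ∑ r ∈ range (m+4), sh (cb (m+1)) r * c^r
      = c * ∑ r ∈ range (m+4), cb (m+1) r * c^r :=
    shift_sum c _ (m+3) (cb_vanish _ _ (by omega))
  have hmain : Sb c (m+3) = ∑ r ∈ range (m+4),
      (3 * (cb (m+2) r * c^r) - 3 * (cb (m+1) r * c^r) - sh (cb (m+1)) r * c^r + cb m r * c^r) := by
    unfold Sb
    apply Finset.sum_congr rfl
    intro r _
    rw [cb_rec m r]; ring
  rw [hmain, P2, P1, P0]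
  rw [Finset.sum_add_distrib, Finset.sum_sub_distrib, Finset.sum_sub_distrib, hshift]
  rw [← Finset.mul_sum, ← Finset.mul_sum]
  ring

/-! ### Factoring the cubic and power sums -/

lemma cubic_factor (c : ℂ) : ∃ α β γ : ℂ, ∀ w : ℂ,
    w^3 - (3+c)*w^2 + 3*w - 1 = (w-α)*(w-β)*(w-γ) := by
  set f : Polynomial ℂ := Polynomial.X^3 - Polynomial.C (3+c) * Polynomial.X^2
      + Polynomial.C 3 * Polynomial.X - Polynomial.C 1 with hf
  have hmon : f.Monic := by unfold f; monicity!
  have hdeg : f.natDegree = 3 := by unfold f; compute_degree!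
  have hsplit : Polynomial.Splits f := IsAlgClosed.splits f
  have heq := hsplit.eq_prod_roots_of_monic hmon
  have hcard : Multiset.card f.roots = 3 := by
    rw [(Polynomial.splits_iff_card_roots).mp hsplit, hdeg]
  obtain ⟨α, β, γ, habc⟩ := Multiset.card_eq_three.mp hcard
  refine ⟨α, β, γ, fun w => ?_⟩
  have h2 : Polynomial.eval w f = (w-α)*(w-β)*(w-γ) := by
    rw [heq, habc]; simp [Polynomial.eval_multiset_prod]; ring
  have h3 : Polynomial.eval w f = w^3 - (3+c)*w^2 + 3*w - 1 := by simp [f]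
  linear_combination h2 - h3

lemma power_sums (c α β γ : ℂ)
    (hroot : ∀ w : ℂ, w^3 - (3+c)*w^2 + 3*w - 1 = (w-α)*(w-β)*(w-γ)) :
    ∀ m : ℕ, (α^m + β^m + γ^m = Sa c m)
      ∧ ((β*γ)^m + (α*γ)^m + (α*β)^m = Sb c m) := by
  have hα : α^3 = (3+c)*α^2 - 3*α + 1 := by linear_combination (hroot α)
  have hβ : β^3 = (3+c)*β^2 - 3*β + 1 := by linear_combination (hroot β)
  have hγ : γ^3 = (3+c)*γ^2 - 3*γ + 1 := by linear_combination (hroot γ)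
  have habc : α*β*γ = 1 := by linear_combination (hroot 0)
  have hs1 : α+β+γ = 3+c := by
    linear_combination ((1:ℂ)/2) * (hroot 1) + ((1:ℂ)/2) * (hroot (-1)) - (hroot 0)
  have hs2 : α*β+β*γ+γ*α = 3 := by
    linear_combination (-(1:ℂ)/2) * (hroot 1) + ((1:ℂ)/2) * (hroot (-1))
  have hiα : (β*γ)^3 = 3*(β*γ)^2 - (3+c)*(β*γ) + 1 := by
    linear_combination (-(β*γ)^3) * hα
      + ((α*β*γ)^2 + α*β*γ + 1 - (3+c)*(β*γ)*(α*β*γ+1) + 3*(β*γ)^2) * habc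
  have hiβ : (α*γ)^3 = 3*(α*γ)^2 - (3+c)*(α*γ) + 1 := by
    linear_combination (-(α*γ)^3) * hβ
      + ((α*β*γ)^2 + α*β*γ + 1 - (3+c)*(α*γ)*(α*β*γ+1) + 3*(α*γ)^2) * habc
  have hiγ : (α*β)^3 = 3*(α*β)^2 - (3+c)*(α*β) + 1 := by
    linear_combination (-(α*β)^3) * hγ
      + ((α*β*γ)^2 + α*β*γ + 1 - (3+c)*(α*β)*(α*β*γ+1) + 3*(α*β)^2) * habc
  have base0a : α^0 + β^0 + γ^0 = Sa c 0 := by simp [Sa, ca]; norm_num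
  have base0b : (β*γ)^0 + (α*γ)^0 + (α*β)^0 = Sb c 0 := by simp [Sb, cb]; norm_num
  have hSa1 : Sa c 1 = 3 + c := by
    simp only [Sa, Finset.sum_range_succ, Finset.sum_range_zero]
    norm_num [ca, Nat.choose]
  have hSa2 : Sa c 2 = 3 + 6*c + c^2 := by
    simp only [Sa, Finset.sum_range_succ, Finset.sum_range_zero]
    norm_num [ca, Nat.choose]
    try ring
  have hSb1 : Sb c 1 = 3 := by
    simp only [Sb, Finset.sum_range_succ, Finset.sum_range_zero]
    norm_num [cb, Nat.choose]
  have hSb2 : Sb c 2 = 3 - 2*c := by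
    simp only [Sb, Finset.sum_range_succ, Finset.sum_range_zero]
    norm_num [cb, Nat.choose]
    try ring
  have base1a : α^1 + β^1 + γ^1 = Sa c 1 := by rw [hSa1]; simpa using hs1
  have base2a : α^2 + β^2 + γ^2 = Sa c 2 := by
    rw [hSa2]; linear_combination (α+β+γ+3+c)*hs1 - 2*hs2
  have base1b : (β*γ)^1 + (α*γ)^1 + (α*β)^1 = Sb c 1 := by
    rw [hSb1]; linear_combination hs2
  have base2b : (β*γ)^2 + (α*γ)^2 + (α*β)^2 = Sb c 2 := by
    rw [hSb2]
    linear_combination (α*β+β*γ+γ*α+3)*hs2 - 2*(α*β*γ)*hs1 + (-(6+2*c))*habc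
  have recA : ∀ m : ℕ, α^(m+3) + β^(m+3) + γ^(m+3)
      = (3+c)*(α^(m+2)+β^(m+2)+γ^(m+2)) - 3*(α^(m+1)+β^(m+1)+γ^(m+1)) + (α^m+β^m+γ^m) := by
    intro m
    linear_combination α^m * hα + β^m * hβ + γ^m * hγ
  have recB : ∀ m : ℕ, (β*γ)^(m+3) + (α*γ)^(m+3) + (α*β)^(m+3)
      = 3*((β*γ)^(m+2)+(α*γ)^(m+2)+(α*β)^(m+2))
        - (3+c)*((β*γ)^(m+1)+(α*γ)^(m+1)+(α*β)^(m+1)) + ((β*γ)^m+(α*γ)^m+(α*β)^m) := by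
    intro m
    linear_combination (β*γ)^m * hiα + (α*γ)^m * hiβ + (α*β)^m * hiγ
  have key : ∀ m : ℕ,
      ((α^m + β^m + γ^m = Sa c m) ∧ ((β*γ)^m + (α*γ)^m + (α*β)^m = Sb c m))
      ∧ ((α^(m+1) + β^(m+1) + γ^(m+1) = Sa c (m+1)) ∧ ((β*γ)^(m+1) + (α*γ)^(m+1) + (α*β)^(m+1) = Sb c (m+1)))
      ∧ ((α^(m+2) + β^(m+2) + γ^(m+2) = Sa c (m+2)) ∧ ((β*γ)^(m+2) + (α*γ)^(m+2) + (α*β)^(m+2) = Sb c (m+2))) := by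
    intro m
    induction m with
    | zero => exact ⟨⟨base0a, base0b⟩, ⟨base1a, base1b⟩, ⟨base2a, base2b⟩⟩
    | succ k ih =>
      refine ⟨ih.2.1, ih.2.2, ?_, ?_⟩
      · rw [show k+1+2 = k+3 by ring, recA k, Sa_rec c k, ih.1.1, ih.2.1.1, ih.2.2.1]
      · rw [show k+1+2 = k+3 by ring, recB k, Sb_rec c k, ih.1.2, ih.2.1.2, ih.2.2.2]
  exact fun m => (key m).1

/-! ### Roots of unity products -/

lemma geom_eval {n : ℕ} {ζ : ℂ} (hζ : IsPrimitiveRoot ζ n) (hn : 0 < n) (w : ℂ) :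
    (∏ k ∈ Icc 1 (n-1), (w - ζ^k)) = ∑ i ∈ range n, w^i := by
  have hP : (Polynomial.X:Polynomial ℂ)^n - 1 = ∏ i ∈ range n, (Polynomial.X - Polynomial.C (ζ^i)) := by
    have := X_pow_sub_C_eq_prod hζ hn (one_pow n)
    simpa using this
  have hsplit : ∏ i ∈ range n, (Polynomial.X - Polynomial.C (ζ^i))
      = (Polynomial.X - 1) * ∏ k ∈ Icc 1 (n-1), (Polynomial.X - Polynomial.C (ζ^k)) := by
    rw [← Finset.mul_prod_erase (range n) _ (Finset.mem_range.mpr hn)]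
    have h0 : (Polynomial.X - Polynomial.C (ζ^0)) = (Polynomial.X - 1 : Polynomial ℂ) := by simp
    have he : (range n).erase 0 = Icc 1 (n-1) := by
      ext k
      simp only [Finset.mem_erase, Finset.mem_range, Finset.mem_Icc]
      omega
    rw [h0, he]
  have hgeom : (Polynomial.X:Polynomial ℂ)^n - 1
      = (Polynomial.X - 1) * ∑ i ∈ range n, (Polynomial.X:Polynomial ℂ)^i := by
    rw [← geom_sum_mul (Polynomial.X:Polynomial ℂ) n]; ring
  have hc : (Polynomial.X - 1 : Polynomial ℂ) ≠ 0 := by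
    have := Polynomial.X_sub_C_ne_zero (1 : ℂ)
    simpa using this
  have hpoly : ∏ k ∈ Icc 1 (n-1), (Polynomial.X - Polynomial.C (ζ^k))
      = ∑ i ∈ range n, (Polynomial.X:Polynomial ℂ)^i :=
    mul_left_cancel₀ hc (by rw [← hsplit, ← hP, hgeom])
  have := congrArg (Polynomial.eval w) hpoly
  simpa [Polynomial.eval_prod, Polynomial.eval_finset_sum] using this

lemma prod_eval {n : ℕ} {ζ : ℂ} (hζ : IsPrimitiveRoot ζ n) (hn : 0 < n) (c : ℂ) (hc : c ≠ 0) :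
    ∏ k ∈ Icc 1 (n-1), ((1-ζ^k)^3 + c * ζ^(2*k))
      = ∑ r ∈ range n, (ca n (r+1) - cb n (r+1)) * c^r := by
  obtain ⟨α, β, γ, hroot⟩ := cubic_factor c
  have hfac : ∀ w:ℂ, (1-w)^3 + c*w^2 = (α-w)*(β-w)*(γ-w) := fun w => by
    linear_combination -(hroot w)
  have habc : α*β*γ = 1 := by linear_combination (hroot 0)
  have h1 : (α-1)*(β-1)*(γ-1) = c := by linear_combination hroot 1
  have hprodf : ∏ k ∈ Icc 1 (n-1), ((1-ζ^k)^3 + c * ζ^(2*k))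
      = (∑ i ∈ range n, α^i) * (∑ i ∈ range n, β^i) * (∑ i ∈ range n, γ^i) := by
    have step1 : ∀ k ∈ Icc 1 (n-1), (1-ζ^k)^3 + c * ζ^(2*k)
        = (α-ζ^k)*(β-ζ^k)*(γ-ζ^k) := by
      intro k _
      have := hfac (ζ^k)
      rw [show (ζ:ℂ)^(2*k) = (ζ^k)^2 from by rw [mul_comm 2 k, pow_mul]]
      exact this
    rw [Finset.prod_congr rfl step1, Finset.prod_mul_distrib, Finset.prod_mul_distrib,
      geom_eval hζ hn α, geom_eval hζ hn β, geom_eval hζ hn γ]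
  have hgm : ∀ ρ:ℂ, (ρ - 1) * (∑ i ∈ range n, ρ^i) = ρ^n - 1 := fun ρ => by
    have := geom_sum_mul ρ n; linear_combination this
  have hps := power_sums c α β γ hroot n
  have hkey : c * ((∑ i ∈ range n, α^i) * (∑ i ∈ range n, β^i) * (∑ i ∈ range n, γ^i))
      = Sa c n - Sb c n := by
    have e1 : ((α-1) * ∑ i ∈ range n, α^i) * ((β-1) * ∑ i ∈ range n, β^i)
        * ((γ-1) * ∑ i ∈ range n, γ^i) = (α^n-1)*(β^n-1)*(γ^n-1) := by
      rw [hgm α, hgm β, hgm γ]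
    have e2 : (α^n-1)*(β^n-1)*(γ^n-1)
        = (α*β*γ)^n - ((β*γ)^n + (α*γ)^n + (α*β)^n) + (α^n+β^n+γ^n) - 1 := by ring
    have e3 : (α*β*γ)^n = 1 := by rw [habc, one_pow]
    calc c * ((∑ i ∈ range n, α^i) * (∑ i ∈ range n, β^i) * (∑ i ∈ range n, γ^i))
        = ((α-1) * ∑ i ∈ range n, α^i) * ((β-1) * ∑ i ∈ range n, β^i)
          * ((γ-1) * ∑ i ∈ range n, γ^i) := by rw [← h1]; ring
      _ = (α^n-1)*(β^n-1)*(γ^n-1) := e1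
      _ = (α*β*γ)^n - ((β*γ)^n + (α*γ)^n + (α*β)^n) + (α^n+β^n+γ^n) - 1 := e2
      _ = Sa c n - Sb c n := by rw [e3, hps.1, hps.2]; ring
  have hSd : Sa c n - Sb c n = c * ∑ r ∈ range n, (ca n (r+1) - cb n (r+1)) * c^r := by
    unfold Sa Sb
    rw [← Finset.sum_sub_distrib]
    rw [Finset.sum_range_succ' (fun r => ca n r * c^r - cb n r * c^r) n]
    have h0 : ca n 0 * c^0 - cb n 0 * c^0 = 0 := by norm_num [ca, cb]
    rw [h0, add_zero, Finset.mul_sum]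
    apply Finset.sum_congr rfl
    intro s _; ring
  apply mul_left_cancel₀ hc
  rw [← hSd, ← hkey, hprodf]

/-! ### zrev generating function -/

lemma zrev_cons (q : ℂ) (m : ℕ) (r : ℕ) :
    zrev q m (List.replicate (r+1) 3)
      = ∑ k ∈ Finset.Icc 1 m, q ^ (2*k) / qnum q k ^ 3 * zrev q (k-1) (List.replicate r 3) := by
  rw [List.replicate_succ]
  show (∑ k ∈ Finset.Icc 1 m, q ^ ((3-1) * k) / qnum q k ^ 3 * zrev q (k - 1) (List.replicate r 3)) = _
  norm_num

lemma zrev_vanish (q : ℂ) : ∀ r m, m < r → zrev q m (List.replicate r 3) = 0 := by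
  intro r
  induction r with
  | zero => intro m h; omega
  | succ s ih =>
    intro m h
    rw [zrev_cons]
    apply Finset.sum_eq_zero
    intro k hk
    simp only [Finset.mem_Icc] at hk
    rw [ih (k-1) (by omega), mul_zero]

lemma zrev_genfun (q x : ℂ) : ∀ m, ∏ k ∈ Icc 1 m, (1 + x * (q^(2*k) / qnum q k^3))
    = ∑ r ∈ range (m+1), zrev q m (List.replicate r 3) * x^r := by
  intro m
  induction m with
  | zero =>
    simp only [Finset.Icc_self, Finset.Icc_eq_empty_of_lt (by omega : (1:ℕ) > 0)]
    simp [show zrev q 0 (List.replicate 0 3) = 1 from rfl]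
    rfl
  | succ m ih =>
    rw [Finset.prod_Icc_succ_top (by omega : 1 ≤ m+1), ih]
    have hE : ∀ r, zrev q (m+1) (List.replicate (r+1) 3)
        = zrev q m (List.replicate (r+1) 3)
          + q^(2*(m+1)) / qnum q (m+1) ^ 3 * zrev q m (List.replicate r 3) := by
      intro r
      rw [zrev_cons, zrev_cons, Finset.sum_Icc_succ_top (by omega : 1 ≤ m+1)]
      rw [show m+1-1 = m from rfl]
    rw [Finset.sum_range_succ' (fun r => zrev q (m+1) (List.replicate r 3) * x^r) (m+1)]
    have h0 : zrev q (m+1) (List.replicate 0 3) * x^0 = 1 := by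
      have hz1 : zrev q (m+1) ([]:List ℕ) = 1 := rfl
      simp [hz1]
    rw [h0]
    have hcong : ∑ r ∈ range (m+1), zrev q (m+1) (List.replicate (r+1) 3) * x^(r+1)
        = ∑ r ∈ range (m+1), (zrev q m (List.replicate (r+1) 3) * x^(r+1)
            + q^(2*(m+1)) / qnum q (m+1) ^ 3 * zrev q m (List.replicate r 3) * x^(r+1)) := by
      apply Finset.sum_congr rfl
      intro r _
      rw [hE r]; ring
    rw [hcong, Finset.sum_add_distrib]
    have hA := Finset.sum_range_succ' (fun r => zrev q m (List.replicate r 3) * x^r) (m+1)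
    have hA2 := Finset.sum_range_succ (fun r => zrev q m (List.replicate r 3) * x^r) (m+1)
    have htop : zrev q m (List.replicate (m+1) 3) * x^(m+1) = 0 := by
      rw [zrev_vanish q (m+1) m (by omega), zero_mul]
    have h00 : zrev q m (List.replicate 0 3) = 1 := rfl
    have hB : ∑ r ∈ range (m+1), q^(2*(m+1)) / qnum q (m+1) ^ 3 * zrev q m (List.replicate r 3) * x^(r+1)
        = (x * (q^(2*(m+1)) / qnum q (m+1) ^ 3)) * ∑ r ∈ range (m+1), zrev q m (List.replicate r 3) * x^r := by
      rw [Finset.mul_sum]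
      apply Finset.sum_congr rfl
      intro r _
      ring
    rw [hB]
    linear_combination hA - hA2 - htop + h00

/-! ### absorption identities -/

lemma I1 (n r : ℕ) (h : r < n) :
    (r+1) * (3 * ((n+2*r+1).choose (3*r+3)) + (n+2*r+1).choose (3*r+2))
      = n * ((n+2*r+1).choose (3*r+2)) := by
  have h1 : (n+2*r+1).choose (3*r+2+1) * (3*r+2+1) = (n+2*r+1).choose (3*r+2) * ((n+2*r+1) - (3*r+2)) :=
    Nat.choose_succ_right_eq (n+2*r+1) (3*r+2)
  have h2 : n+2*r+1 - (3*r+2) = n - (r+1) := by omega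
  rw [h2] at h1
  have h3 : (r+1) * (3 * ((n+2*r+1).choose (3*r+3)) + (n+2*r+1).choose (3*r+2))
      = (n+2*r+1).choose (3*r+2+1) * (3*r+2+1) + (r+1) * ((n+2*r+1).choose (3*r+2)) := by ring_nf
  rw [h3, h1]
  have h4 : n - (r+1) + (r+1) = n := by omega
  calc (n+2*r+1).choose (3*r+2) * (n - (r+1)) + (r+1) * ((n+2*r+1).choose (3*r+2))
      = (n+2*r+1).choose (3*r+2) * ((n - (r+1)) + (r+1)) := by ring
    _ = n * ((n+2*r+1).choose (3*r+2)) := by rw [h4]; ring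

lemma I2 (n r : ℕ) (_h : r < n) :
    (r+1) * (3 * ((n+r).choose (3*r+3)) + 2 * ((n+r).choose (3*r+2)))
      = n * ((n+r).choose (3*r+2)) := by
  by_cases hc : 3*r+2 ≤ n+r
  · have h1 : (n+r).choose (3*r+2+1) * (3*r+2+1) = (n+r).choose (3*r+2) * ((n+r) - (3*r+2)) :=
      Nat.choose_succ_right_eq (n+r) (3*r+2)
    have h2 : n+r - (3*r+2) = n - (2*r+2) := by omega
    rw [h2] at h1
    have h3 : (r+1) * (3 * ((n+r).choose (3*r+3)) + 2 * ((n+r).choose (3*r+2)))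
        = (n+r).choose (3*r+2+1) * (3*r+2+1) + (2*r+2) * ((n+r).choose (3*r+2)) := by ring_nf
    rw [h3, h1]
    have h4 : n - (2*r+2) + (2*r+2) = n := by omega
    calc (n+r).choose (3*r+2) * (n - (2*r+2)) + (2*r+2) * ((n+r).choose (3*r+2))
        = (n+r).choose (3*r+2) * ((n - (2*r+2)) + (2*r+2)) := by ring
      _ = n * ((n+r).choose (3*r+2)) := by rw [h4]; ring
  · rw [Nat.choose_eq_zero_of_lt (by omega), Nat.choose_eq_zero_of_lt (by omega)]
    simp

lemma sq_choose (n : ℕ) : (n+1).choose 2 + n.choose 2 = n^2 := by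
  induction n with
  | zero => simp
  | succ k ih =>
    show (k+2).choose 2 + (k+1).choose 2 = (k+1)^2
    have h1 : (k+2).choose 2 = (k+1).choose 1 + (k+1).choose 2 := Nat.choose_succ_succ (k+1) 1
    have h2 : (k+1).choose 2 = k.choose 1 + k.choose 2 := Nat.choose_succ_succ k 1
    have h3 : (k+1).choose 1 = k+1 := Nat.choose_one_right _
    have h4 : k.choose 1 = k := Nat.choose_one_right _
    have h5 : (k+1)^2 = k^2 + 2*k + 1 := by ring
    omega

/-! ### Main theorem -/

theorem stmt6 (n r : ℕ) (hn : 3 * r + 2 < n) (ζ : ℂ) (hζ : IsPrimitiveRoot ζ n) :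
    z ζ n (List.replicate r 3)
      = (1 / ((n : ℂ) ^ 2 * (r + 1)))
          * (((n + 2 * r + 1).choose (3 * r + 2) : ℂ)
              + (-1) ^ r * ((n + r).choose (3 * r + 2) : ℂ))
          * (1 - ζ) ^ (3 * r) := by
  have hn0 : 0 < n := by omega
  have hr : r < n := by omega
  have hζ1 : ζ ≠ 1 := hζ.ne_one (by omega)
  have hione : (1:ℂ) - ζ ≠ 0 := sub_ne_zero.mpr (Ne.symm hζ1)
  have hkz : ∀ k ∈ Icc 1 (n-1), (1:ℂ) - ζ^k ≠ 0 := by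
    intro k hk
    simp only [Finset.mem_Icc] at hk
    intro hcon
    have hone : ζ^k = 1 := by linear_combination -hcon
    rw [hζ.pow_eq_one_iff_dvd] at hone
    have := Nat.le_of_dvd (by omega) hone
    omega
  have hN : (∏ k ∈ Icc 1 (n-1), ((1:ℂ) - ζ^k)) = (n:ℂ) := by
    have := geom_eval hζ hn0 1
    simpa using this
  have hnc : (n:ℂ) ≠ 0 := Nat.cast_ne_zero.mpr (by omega)
  have hr1 : ((r:ℂ)+1) ≠ 0 := by
    have : (((r+1:ℕ)):ℂ) ≠ 0 := Nat.cast_ne_zero.mpr (Nat.succ_ne_zero r)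
    push_cast at this
    exact this
  set E : ℕ → ℂ := fun s => zrev ζ (n-1) (List.replicate s 3) with hE
  set W : ℕ → ℂ := fun s => (ca n (s+1) - cb n (s+1)) * ((1-ζ)^3)^s / (n:ℂ)^3 with hW
  -- value of W 0
  have hW0 : W 0 = 1 := by
    have hI1 := congrArg (fun t : ℕ => (t:ℂ)) (I1 n 0 (by omega))
    have hI2 := congrArg (fun t : ℕ => (t:ℂ)) (I2 n 0 (by omega))
    have hsq := congrArg (fun t : ℕ => (t:ℂ)) (sq_choose n)
    simp only [Nat.add_zero, Nat.mul_zero, Nat.zero_add] at hI1 hI2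
    push_cast at hI1 hI2 hsq
    simp only [hW, ca, cb]
    norm_num
    field_simp
    first
    | linear_combination hI1 + hI2 + (n:ℂ)*hsq
    | linear_combination (n:ℂ)^3*hI1 + (n:ℂ)^3*hI2 + (n:ℂ)^4*hsq
    | linear_combination -hI1 - hI2 - (n:ℂ)*hsq
  -- function identity
  have hfun : ∀ x:ℂ, ∑ s ∈ range n, E s * x^s = ∑ s ∈ range n, W s * x^s := by
    intro x
    by_cases hx : x = 0
    · subst hx
      have hL : ∑ s ∈ range n, E s * (0:ℂ)^s = E 0 := by
        rw [Finset.sum_eq_single 0]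
        · simp
        · intro b _ hb; rw [zero_pow hb, mul_zero]
        · intro hcon; exact absurd (Finset.mem_range.mpr hn0) hcon
      have hR : ∑ s ∈ range n, W s * (0:ℂ)^s = W 0 := by
        rw [Finset.sum_eq_single 0]
        · simp
        · intro b _ hb; rw [zero_pow hb, mul_zero]
        · intro hcon; exact absurd (Finset.mem_range.mpr hn0) hcon
      rw [hL, hR, hW0]
      rfl
    · have hgen := zrev_genfun ζ x (n-1)
      rw [show n-1+1 = n by omega] at hgen
      have hcne : x * (1-ζ)^3 ≠ 0 := mul_ne_zero hx (pow_ne_zero _ hione)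
      have hfactor : ∀ k ∈ Icc 1 (n-1), (1:ℂ) + x * (ζ^(2*k) / qnum ζ k^3)
          = ((1-ζ^k)^3 + (x*(1-ζ)^3) * ζ^(2*k)) / (1-ζ^k)^3 := by
        intro k hk
        have hkz' := hkz k hk
        unfold qnum
        field_simp
      rw [Finset.prod_congr rfl hfactor, Finset.prod_div_distrib,
        prod_eval hζ hn0 _ hcne] at hgen
      have hden : ∏ k ∈ Icc 1 (n-1), ((1:ℂ)-ζ^k)^3 = (n:ℂ)^3 := by
        rw [Finset.prod_pow, hN]
      rw [hden] at hgen
      rw [← hgen, Finset.sum_div]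
      apply Finset.sum_congr rfl
      intro s _
      simp only [hW]
      rw [mul_pow]
      ring
  -- coefficient extraction
  have hcoeff : ∀ (f : ℕ → ℂ) (s : ℕ), s < n →
      (∑ t ∈ range n, Polynomial.C (f t) * Polynomial.X^t).coeff s = f s := by
    intro f s hs
    rw [Polynomial.finset_sum_coeff]
    simp only [Polynomial.coeff_C_mul, Polynomial.coeff_X_pow, mul_ite, mul_one, mul_zero]
    rw [Finset.sum_ite_eq (range n) s f, if_pos (Finset.mem_range.mpr hs)]
  have hEW : E r = W r := by
    have hpe : (∑ t ∈ range n, Polynomial.C (E t) * Polynomial.X^t)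
        = (∑ t ∈ range n, Polynomial.C (W t) * Polynomial.X^t) := by
      apply Polynomial.funext
      intro x
      simp only [Polynomial.eval_finset_sum, Polynomial.eval_mul, Polynomial.eval_pow,
        Polynomial.eval_C, Polynomial.eval_X]
      exact hfun x
    have := congrArg (fun p => Polynomial.coeff p r) hpe
    rw [hcoeff E r hr, hcoeff W r hr] at this
    exact this
  have hz : z ζ n (List.replicate r 3) = E r := by
    unfold z
    rw [List.reverse_replicate]
  rw [hz, hEW]
  -- final computation
  have hI1 := congrArg (fun t : ℕ => (t:ℂ)) (I1 n r hr)
  have hI2 := congrArg (fun t : ℕ => (t:ℂ)) (I2 n r hr)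
  push_cast at hI1 hI2
  simp only [hW, ca, cb]
  rw [show (((1:ℂ)-ζ)^3)^r = (1-ζ)^(3*r) from by rw [← pow_mul]]
  field_simp
  linear_combination hI1 + ((-1:ℂ))^r * hI2
end

section
/- Let n, s_1, …, s_r be positive integers and ζ a primitive n-th root of unity. Then z_n(s; ζ) = (−1)^r · Σ ∏_{i=1}^{w} ζ^{j_i}/[j_i]_ζ, where w = s_1+⋯+s_r and the sum is over all integers 1 ≤ j_1 ≤ j_2 ≤ ⋯ ≤ j_w ≤ n−1 satisfying j_i < j_{i+1} for i ∈ I = {s_1, s_1+s_2, …, s_1+⋯+s_{r−1}} (and j_i ≤ j_{i+1} otherwise). -/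
open Finset

/-- Nested mixed-inequality sum, recursing from the top index `j_w` down.
Each `Bool` says whether the next lower index must be strictly smaller
(`true`) or only weakly smaller (`false`). -/
noncomputable def mixed (q : ℂ) : ℕ → List Bool → ℂ
  | _, [] => 1
  | n, b :: bs =>
      ∑ j ∈ Finset.Icc 1 n, q ^ j / qnum q j * mixed q (if b then j - 1 else j) bs

/-- The strictness pattern determined by the composition `s = (s_1,…,s_r)`:
reading the indices `j_w, …, j_1` from the top, inequalities are weak inside
each block `s_i` and strict between blocks (positions `I = {s_1, s_1+s_2, …}`). -/
def pattern (s : List ℕ) : List Bool :=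
  s.reverse.flatMap fun si => List.replicate (si - 1) false ++ [true]

namespace Stmt12Aux

variable {q : ℂ} {n : ℕ}

noncomputable def con (q : ℂ) (k t : ℕ) : ℂ :=
  ∏ j ∈ Finset.Icc 1 t, (1 - q ^ (k + j)) / (q ^ k * (1 - q ^ j))
variable {q : ℂ} {n : ℕ}
lemma hsub (hprim : ∀ j, 1 ≤ j → j ≤ n - 1 → q ^ j ≠ 1)
    {j : ℕ} (h1 : 1 ≤ j) (h2 : j ≤ n - 1) : (1 : ℂ) - q ^ j ≠ 0 :=
  sub_ne_zero.mpr (Ne.symm (hprim j h1 h2))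
lemma con_zero (k : ℕ) : con q k 0 = 1 := by simp [con]
lemma con_succ (k t : ℕ) :
    con q k (t + 1) = con q k t * ((1 - q ^ (k + (t + 1))) / (q ^ k * (1 - q ^ (t + 1)))) := by
  unfold con
  exact Finset.prod_Icc_succ_top (by omega) _

lemma con_cross (hq0 : q ≠ 0) (hprim : ∀ j, 1 ≤ j → j ≤ n - 1 → q ^ j ≠ 1) :
    ∀ t, t + 1 ≤ n - 1 → ∀ m, m + 1 ≤ n - 1 →
      con q m (t + 1) * q ^ m * (1 - q ^ (t + 1))
        = con q (m + 1) t * (1 - q ^ (m + 1)) * q ^ t := by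
  intro t
  induction t with
  | zero =>
    intro ht m hm
    have h1 : (1 : ℂ) - q ^ 1 ≠ 0 := hsub hprim le_rfl ht
    have hqm : q ^ m ≠ 0 := pow_ne_zero _ hq0
    rw [show (1:ℕ) = 0 + 1 from rfl, con_succ, con_zero, con_zero]
    simp only [pow_zero, pow_one, zero_add, one_mul, mul_one]
    rw [pow_one] at h1
    field_simp
  | succ t ih =>
    intro ht m hm
    have ht' : t + 1 ≤ n - 1 := by omega
    have h1 : (1 : ℂ) - q ^ (t + 1) ≠ 0 := hsub hprim (by omega) ht'
    have h2 : (1 : ℂ) - q ^ (t + 1 + 1) ≠ 0 := hsub hprim (by omega) ht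
    have hm1 : (1 : ℂ) - q ^ (m + 1) ≠ 0 := hsub hprim (by omega) hm
    have hqm : q ^ m ≠ 0 := pow_ne_zero _ hq0
    have hqt : q ^ t ≠ 0 := pow_ne_zero _ hq0
    have hA : con q (m + 1) t
        = con q m (t + 1) * q ^ m * (1 - q ^ (t + 1)) / ((1 - q ^ (m + 1)) * q ^ t) := by
      rw [eq_div_iff (mul_ne_zero hm1 hqt)]
      linear_combination -(ih ht' m hm)
    rw [con_succ m (t + 1), con_succ (m + 1) t, hA]
    have e1 : m + (t + 1 + 1) = m + 1 + (t + 1) := by ring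
    rw [e1]
    field_simp
    ring

lemma Icc_split (a b : ℕ) (h : a ≤ b) : Finset.Icc a b = insert a (Finset.Icc (a+1) b) := by
  ext x
  simp only [Finset.mem_Icc, Finset.mem_insert]
  omega

lemma not_mem_Icc_succ (a b : ℕ) : a ∉ Finset.Icc (a+1) b := by
  simp only [Finset.mem_Icc]
  omega

lemma con_eq_zero (hqn : q ^ n = 1) {k t : ℕ} (hk1 : 1 ≤ k) (hk2 : k ≤ n - 1)
    (ht : n - k ≤ t) : con q k t = 0 := by
  apply Finset.prod_eq_zero (i := n - k)
  · simp only [Finset.mem_Icc]; omega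
  · have hnk : k + (n - k) = n := by omega
    rw [hnk, hqn]
    simp

lemma con_step_k (hq0 : q ≠ 0) (hprim : ∀ j, 1 ≤ j → j ≤ n - 1 → q ^ j ≠ 1)
    {m t : ℕ} (hm : m + 1 ≤ n - 1) (ht : t ≤ n - 1) :
    con q (m + 1) t * (1 - q ^ (m + 1)) * q ^ t = con q m t * (1 - q ^ (m + t + 1)) := by
  cases t with
  | zero => simp [con_zero]
  | succ t' =>
    have ht1 : t' + 1 ≤ n - 1 := ht
    have h1 : (1 : ℂ) - q ^ (t' + 1) ≠ 0 := hsub hprim (by omega) ht1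
    have hm1 : (1 : ℂ) - q ^ (m + 1) ≠ 0 := hsub hprim (by omega) hm
    have hqm : q ^ m ≠ 0 := pow_ne_zero _ hq0
    have hqt : q ^ t' ≠ 0 := pow_ne_zero _ hq0
    have hq1 : q ^ (m+1) ≠ 0 := pow_ne_zero _ hq0
    have hc := con_cross hq0 hprim t' ht1 m hm
    have hA : con q (m + 1) t'
        = con q m (t' + 1) * q ^ m * (1 - q ^ (t' + 1)) / ((1 - q ^ (m + 1)) * q ^ t') := by
      rw [eq_div_iff (mul_ne_zero hm1 hqt)]
      linear_combination -hc
    rw [con_succ (m+1) t', hA]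
    have e1 : m + 1 + (t' + 1) = m + (t' + 1) + 1 := by ring
    rw [e1]
    field_simp
    ring

noncomputable def X (q : ℂ) (k : ℕ) : ℂ := (1 - q ^ k)⁻¹

lemma con_L7 (hq0 : q ≠ 0) (hprim : ∀ j, 1 ≤ j → j ≤ n - 1 → q ^ j ≠ 1)
    {m j : ℕ} (hj1 : 1 ≤ j) (hj2 : j ≤ n - 1) (hm : m + 1 ≤ n - 1) :
    X q j * con q m j - X q j * con q (m + 1) j
      = -(X q (m + 1) * (q ^ j)⁻¹ * con q m j) := by
  have hj : (1 : ℂ) - q ^ j ≠ 0 := hsub hprim hj1 hj2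
  have hm1 : (1 : ℂ) - q ^ (m + 1) ≠ 0 := hsub hprim (by omega) hm
  have hqj : q ^ j ≠ 0 := pow_ne_zero _ hq0
  have hs := con_step_k hq0 hprim hm hj2
  have hA : con q (m + 1) j = con q m j * (1 - q ^ (m + j + 1)) / ((1 - q ^ (m + 1)) * q ^ j) := by
    rw [eq_div_iff (mul_ne_zero hm1 hqj)]
    linear_combination hs
  rw [hA]
  unfold X
  field_simp
  ring

lemma con_S' (hq0 : q ≠ 0) (hqn : q ^ n = 1)
    (hprim : ∀ j, 1 ≤ j → j ≤ n - 1 → q ^ j ≠ 1)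
    {m : ℕ} (hm : m + 1 ≤ n - 1) :
    ∀ d t, t + d = n - 1 →
      con q (m + 1) t = -∑ j ∈ Finset.Icc (t + 1) (n - 1), (q ^ j)⁻¹ * con q m j := by
  intro d
  induction d with
  | zero =>
    intro t htd
    rw [Finset.Icc_eq_empty (by omega), Finset.sum_empty, neg_zero]
    exact con_eq_zero hqn (by omega) (by omega) (by omega)
  | succ d ih =>
    intro t htd
    have ht1 : t + 1 ≤ n - 1 := by omega
    rw [Icc_split (t+1) (n-1) ht1, Finset.sum_insert (not_mem_Icc_succ _ _)]
    have hIH := ih (t+1) (by omega)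
    have h1 : (1 : ℂ) - q ^ (t + 1) ≠ 0 := hsub hprim (by omega) ht1
    have hm1 : (1 : ℂ) - q ^ (m + 1) ≠ 0 := hsub hprim (by omega) hm
    have hqm : q ^ m ≠ 0 := pow_ne_zero _ hq0
    have hqt : q ^ (t+1) ≠ 0 := pow_ne_zero _ hq0
    have hqt' : q ^ t ≠ 0 := pow_ne_zero _ hq0
    have hq1 : q ^ (m+1) ≠ 0 := pow_ne_zero _ hq0
    have hc := con_cross hq0 hprim t ht1 m hm
    have hB : con q m (t + 1)
        = con q (m + 1) t * (1 - q ^ (m + 1)) * q ^ t / (q ^ m * (1 - q ^ (t + 1))) := by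
      rw [eq_div_iff (mul_ne_zero hqm h1)]
      linear_combination hc
    rw [neg_add, ← hIH, hB, con_succ (m+1) t]
    have e1 : m + 1 + (t + 1) = m + (t + 1) + 1 := by ring
    rw [e1]
    field_simp
    ring

lemma con_W (hq0 : q ≠ 0) (hqn : q ^ n = 1)
    (hprim : ∀ j, 1 ≤ j → j ≤ n - 1 → q ^ j ≠ 1)
    {k : ℕ} (hk1 : 1 ≤ k) (hk2 : k ≤ n - 1) :
    ∀ d t, t + d = n - 1 →
      (X q k - 1) * con q k t
        = -∑ j ∈ Finset.Icc (t + 1) (n - 1), X q j * con q k (j - 1) := by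
  intro d
  induction d with
  | zero =>
    intro t htd
    rw [Finset.Icc_eq_empty (by omega), Finset.sum_empty, neg_zero,
      con_eq_zero hqn hk1 hk2 (by omega), mul_zero]
  | succ d ih =>
    intro t htd
    have ht1 : t + 1 ≤ n - 1 := by omega
    rw [Icc_split (t+1) (n-1) ht1, Finset.sum_insert (not_mem_Icc_succ _ _)]
    have hIH := ih (t+1) (by omega)
    rw [neg_add, ← hIH]
    simp only [Nat.add_sub_cancel]
    have h1 : (1 : ℂ) - q ^ (t + 1) ≠ 0 := hsub hprim (by omega) ht1
    have hk : (1 : ℂ) - q ^ k ≠ 0 := hsub hprim hk1 hk2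
    have hqk : q ^ k ≠ 0 := pow_ne_zero _ hq0
    rw [con_succ k t]
    unfold X
    field_simp
    ring

lemma con_S (hn : 2 ≤ n) (hq0 : q ≠ 0) (hqn : q ^ n = 1)
    (hprim : ∀ j, 1 ≤ j → j ≤ n - 1 → q ^ j ≠ 1) :
    ∀ d m, m + d = n - 1 → ∀ t, t ≤ n - 1 →
      ∑ k ∈ Finset.Icc (m + 1) (n - 1), X q k * con q k t
        = ∑ j ∈ Finset.Icc (t + 1) (n - 1), X q j * con q m j := by
  intro d
  induction d with
  | zero =>
    intro m hmd t ht
    rw [Finset.Icc_eq_empty (by omega), Finset.sum_empty]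
    rw [eq_comm]
    apply Finset.sum_eq_zero
    intro j hj
    simp only [Finset.mem_Icc] at hj
    rw [show m = n - 1 by omega, con_eq_zero hqn (by omega) (by omega) (by omega), mul_zero]
  | succ d ih =>
    intro m hmd t ht
    have hm1 : m + 1 ≤ n - 1 := by omega
    rw [Icc_split (m+1) (n-1) hm1, Finset.sum_insert (not_mem_Icc_succ _ _)]
    rw [ih (m+1) (by omega) t ht]
    have hS' := con_S' hq0 hqn hprim hm1 (n - 1 - t) t (by omega)
    have hsum : ∑ j ∈ Finset.Icc (t + 1) (n - 1), X q j * con q (m+1) j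
        = ∑ j ∈ Finset.Icc (t + 1) (n - 1),
            (X q j * con q m j + X q (m+1) * (q ^ j)⁻¹ * con q m j) := by
      apply Finset.sum_congr rfl
      intro j hj
      simp only [Finset.mem_Icc] at hj
      have h7 := con_L7 hq0 hprim (by omega : 1 ≤ j) (by omega : j ≤ n - 1) hm1
      linear_combination -h7
    rw [hsum, Finset.sum_add_distrib]
    have hpull : ∑ j ∈ Finset.Icc (t + 1) (n - 1), X q (m+1) * (q ^ j)⁻¹ * con q m j
        = X q (m+1) * ∑ j ∈ Finset.Icc (t + 1) (n - 1), (q ^ j)⁻¹ * con q m j := by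
      rw [Finset.mul_sum]
      apply Finset.sum_congr rfl
      intro j hj
      ring
    rw [hpull]
    have : ∑ j ∈ Finset.Icc (t + 1) (n - 1), (q ^ j)⁻¹ * con q m j = -con q (m+1) t := by
      linear_combination hS'
    rw [this]
    ring

lemma con_k_zero (hprim : ∀ j, 1 ≤ j → j ≤ n - 1 → q ^ j ≠ 1)
    {t : ℕ} (ht : t ≤ n - 1) : con q 0 t = 1 := by
  unfold con
  apply Finset.prod_eq_one
  intro j hj
  simp only [Finset.mem_Icc] at hj
  have h := hsub hprim hj.1 (le_trans hj.2 ht)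
  simp only [zero_add, pow_zero, one_mul]
  exact div_self h

noncomputable def Zx (q : ℂ) : ℕ → List ℕ → ℂ
  | _, [] => 1
  | m, s :: rest =>
      ∑ k ∈ Finset.Icc 1 m, X q k * (X q k - 1) ^ (s - 1) * Zx q (k - 1) rest

noncomputable def Ws (q : ℂ) (n : ℕ) : ℕ → List Bool → ℂ
  | _, [] => 1
  | a, b :: bs =>
      ∑ j ∈ Finset.Icc a (n - 1), X q j * Ws q n (if b then j + 1 else j) bs

def blockOf (si : ℕ) : List Bool := List.replicate (si - 1) false ++ [true]

lemma Ws_nil (a : ℕ) : Ws q n a [] = 1 := rfl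
lemma Ws_cons (a : ℕ) (b : Bool) (bs : List Bool) :
    Ws q n a (b :: bs) = ∑ j ∈ Finset.Icc a (n - 1), X q j * Ws q n (if b then j + 1 else j) bs := rfl
lemma Zx_nil (m : ℕ) : Zx q m [] = 1 := rfl
lemma Zx_cons (m s : ℕ) (rest : List ℕ) :
    Zx q m (s :: rest) = ∑ k ∈ Finset.Icc 1 m, X q k * (X q k - 1) ^ (s - 1) * Zx q (k - 1) rest := rfl

lemma weak_step (hq0 : q ≠ 0) (hqn : q ^ n = 1)
    (hprim : ∀ j, 1 ≤ j → j ≤ n - 1 → q ^ j ≠ 1)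
    (ρ : List ℕ) (e t : ℕ) (ht : t ≤ n - 1)
    (ihe : ∀ t', t' ≤ n - 1 →
      ∑ k ∈ Finset.Icc 1 (n - 1), X q k * (X q k - 1) ^ e * Zx q (k - 1) ρ * con q k t'
        = (-1) ^ (e + ρ.sum + ρ.length)
            * Ws q n (t' + 1) (List.replicate e false ++ [true] ++ ρ.flatMap blockOf)) :
    ∑ k ∈ Finset.Icc 1 (n - 1), X q k * (X q k - 1) ^ (e + 1) * Zx q (k - 1) ρ * con q k t
      = (-1) ^ (e + 1 + ρ.sum + ρ.length)
          * Ws q n (t + 1) (List.replicate (e + 1) false ++ [true] ++ ρ.flatMap blockOf) := by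
  have key : ∀ k ∈ Finset.Icc 1 (n - 1),
      X q k * (X q k - 1) ^ (e + 1) * Zx q (k - 1) ρ * con q k t
      = ∑ j ∈ Finset.Icc (t + 1) (n - 1),
          -(X q j * (X q k * (X q k - 1) ^ e * Zx q (k - 1) ρ * con q k (j - 1))) := by
    intro k hk
    simp only [Finset.mem_Icc] at hk
    have hW := con_W hq0 hqn hprim hk.1 hk.2 (n - 1 - t) t (by omega)
    have hstep : X q k * (X q k - 1) ^ (e + 1) * Zx q (k - 1) ρ * con q k t
        = (X q k * (X q k - 1) ^ e * Zx q (k - 1) ρ) * ((X q k - 1) * con q k t) := by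
      ring
    rw [hstep, hW, mul_neg, Finset.mul_sum, ← Finset.sum_neg_distrib]
    apply Finset.sum_congr rfl
    intro j _
    ring
  rw [Finset.sum_congr rfl key, Finset.sum_comm]
  have inner : ∀ j ∈ Finset.Icc (t + 1) (n - 1),
      ∑ k ∈ Finset.Icc 1 (n - 1),
        -(X q j * (X q k * (X q k - 1) ^ e * Zx q (k - 1) ρ * con q k (j - 1)))
      = -(X q j * ((-1) ^ (e + ρ.sum + ρ.length)
          * Ws q n j (List.replicate e false ++ [true] ++ ρ.flatMap blockOf))) := by
    intro j hj
    simp only [Finset.mem_Icc] at hj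
    rw [Finset.sum_neg_distrib, ← Finset.mul_sum, ihe (j - 1) (by omega),
      show j - 1 + 1 = j by omega]
  rw [Finset.sum_congr rfl inner, List.replicate_succ, List.cons_append, List.cons_append,
    Ws_cons, Finset.mul_sum]
  apply Finset.sum_congr rfl
  intro j _
  simp only [Bool.false_eq_true, if_false, pow_succ]
  ring

lemma Dlem (hn : 2 ≤ n) (hq0 : q ≠ 0) (hqn : q ^ n = 1)
    (hprim : ∀ j, 1 ≤ j → j ≤ n - 1 → q ^ j ≠ 1) :
    ∀ (ρ : List ℕ), (∀ x ∈ ρ, 0 < x) → ∀ e t, t ≤ n - 1 →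
      ∑ k ∈ Finset.Icc 1 (n - 1), X q k * (X q k - 1) ^ e * Zx q (k - 1) ρ * con q k t
        = (-1) ^ (e + ρ.sum + ρ.length)
            * Ws q n (t + 1) (List.replicate e false ++ [true] ++ ρ.flatMap blockOf) := by
  intro ρ
  induction ρ with
  | nil =>
    intro _ e
    induction e with
    | zero =>
      intro t ht
      have h0 : ∑ k ∈ Finset.Icc 1 (n - 1), X q k * (X q k - 1) ^ 0 * Zx q (k - 1) [] * con q k t
          = ∑ k ∈ Finset.Icc (0 + 1) (n - 1), X q k * con q k t := by
        apply Finset.sum_congr rfl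
        intro k _
        rw [Zx_nil, pow_zero]
        ring
      rw [h0, con_S hn hq0 hqn hprim (n - 1) 0 (by omega) t ht]
      have h1 : ∑ j ∈ Finset.Icc (t + 1) (n - 1), X q j * con q 0 j
          = ∑ j ∈ Finset.Icc (t + 1) (n - 1), X q j * Ws q n (j + 1) [] := by
        apply Finset.sum_congr rfl
        intro j hj
        simp only [Finset.mem_Icc] at hj
        rw [con_k_zero hprim hj.2, Ws_nil]
      rw [h1]
      simp only [List.sum_nil, List.length_nil, List.flatMap_nil, List.replicate,
        List.nil_append, List.append_nil, pow_zero, one_mul, Nat.add_zero]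
      rw [Ws_cons]
      simp only [if_true]
    | succ e ihe =>
      intro t ht
      exact weak_step hq0 hqn hprim [] e t ht ihe
  | cons s' rest ih =>
    intro hpos e
    have hrest : ∀ x ∈ rest, 0 < x := fun x hx => hpos x (List.mem_cons_of_mem _ hx)
    have hs' : 0 < s' := hpos s' (List.mem_cons_self)
    induction e with
    | zero =>
      intro t ht
      -- strict step
      have h0 : ∑ k ∈ Finset.Icc 1 (n - 1),
            X q k * (X q k - 1) ^ 0 * Zx q (k - 1) (s' :: rest) * con q k t
          = ∑ k ∈ Finset.Icc 1 (n - 1), ∑ k' ∈ Finset.Icc 1 (k - 1),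
              (X q k' * (X q k' - 1) ^ (s' - 1) * Zx q (k' - 1) rest) * (X q k * con q k t) := by
        apply Finset.sum_congr rfl
        intro k _
        have : X q k * (X q k - 1) ^ 0 * Zx q (k - 1) (s' :: rest) * con q k t
            = Zx q (k - 1) (s' :: rest) * (X q k * con q k t) := by ring
        rw [this, Zx_cons, Finset.sum_mul]
      rw [h0]
      have hswap : ∑ k ∈ Finset.Icc 1 (n - 1), ∑ k' ∈ Finset.Icc 1 (k - 1),
              (X q k' * (X q k' - 1) ^ (s' - 1) * Zx q (k' - 1) rest) * (X q k * con q k t)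
          = ∑ k' ∈ Finset.Icc 1 (n - 1), ∑ k ∈ Finset.Icc (k' + 1) (n - 1),
              (X q k' * (X q k' - 1) ^ (s' - 1) * Zx q (k' - 1) rest) * (X q k * con q k t) := by
        apply Finset.sum_comm'
        intro x y
        simp only [Finset.mem_Icc]
        omega
      rw [hswap]
      have hinner : ∀ k' ∈ Finset.Icc 1 (n - 1),
          ∑ k ∈ Finset.Icc (k' + 1) (n - 1),
              (X q k' * (X q k' - 1) ^ (s' - 1) * Zx q (k' - 1) rest) * (X q k * con q k t)
          = ∑ j ∈ Finset.Icc (t + 1) (n - 1),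
              X q j * (X q k' * (X q k' - 1) ^ (s' - 1) * Zx q (k' - 1) rest * con q k' j) := by
        intro k' hk'
        simp only [Finset.mem_Icc] at hk'
        rw [← Finset.mul_sum, con_S hn hq0 hqn hprim (n - 1 - k') k' (by omega) t ht,
          Finset.mul_sum]
        apply Finset.sum_congr rfl
        intro j _
        ring
      rw [Finset.sum_congr rfl hinner, Finset.sum_comm]
      have hfin : ∀ j ∈ Finset.Icc (t + 1) (n - 1),
          ∑ k' ∈ Finset.Icc 1 (n - 1),
              X q j * (X q k' * (X q k' - 1) ^ (s' - 1) * Zx q (k' - 1) rest * con q k' j)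
          = X q j * ((-1) ^ (s' - 1 + rest.sum + rest.length)
              * Ws q n (j + 1) (List.replicate (s' - 1) false ++ [true] ++ rest.flatMap blockOf)) := by
        intro j hj
        simp only [Finset.mem_Icc] at hj
        rw [← Finset.mul_sum, ih hrest (s' - 1) j (by omega)]
      rw [Finset.sum_congr rfl hfin]
      have hlist : List.replicate 0 false ++ [true] ++ (s' :: rest).flatMap blockOf
          = true :: (List.replicate (s' - 1) false ++ [true] ++ rest.flatMap blockOf) := by
        simp [blockOf, List.flatMap_cons, List.append_assoc]
      rw [hlist, Ws_cons]
      simp only [if_true]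
      rw [Finset.mul_sum]
      have hsign : ((-1 : ℂ)) ^ (0 + (s' :: rest).sum + (s' :: rest).length)
          = (-1) ^ (s' - 1 + rest.sum + rest.length) := by
        have : 0 + (s' :: rest).sum + (s' :: rest).length
            = (s' - 1 + rest.sum + rest.length) + 2 := by
          simp only [List.sum_cons, List.length_cons]
          omega
        rw [this, pow_add]
        norm_num
      rw [hsign]
      apply Finset.sum_congr rfl
      intro j _
      ring
    | succ e ihe =>
      intro t ht
      exact weak_step hq0 hqn hprim (s' :: rest) e t ht ihe

lemma zrev_eq (hn : 2 ≤ n) (hq0 : q ≠ 0)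
    (hprim : ∀ j, 1 ≤ j → j ≤ n - 1 → q ^ j ≠ 1) :
    ∀ (σ : List ℕ) (m : ℕ), m ≤ n - 1 → (∀ x ∈ σ, 0 < x) →
      zrev q m σ = (1 - q) ^ σ.sum * Zx q m σ := by
  have hq1 : (1 : ℂ) - q ≠ 0 := by
    have := hsub hprim le_rfl (by omega : 1 ≤ n - 1)
    rwa [pow_one] at this
  intro σ
  induction σ with
  | nil => intro m _ _; simp [zrev, Zx_nil]
  | cons s rest ihσ =>
    intro m hm hpos
    have hs : 0 < s := hpos s (List.mem_cons_self)
    have hrest : ∀ x ∈ rest, 0 < x := fun x hx => hpos x (List.mem_cons_of_mem _ hx)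
    obtain ⟨s', rfl⟩ : ∃ s', s = s' + 1 := ⟨s - 1, by omega⟩
    show (∑ k ∈ Finset.Icc 1 m, q ^ ((s' + 1 - 1) * k) / qnum q k ^ (s' + 1) * zrev q (k - 1) rest)
        = _
    rw [Zx_cons, Finset.mul_sum]
    apply Finset.sum_congr rfl
    intro k hk
    simp only [Finset.mem_Icc] at hk
    have hk1 : (1 : ℂ) - q ^ k ≠ 0 := hsub hprim hk.1 (le_trans hk.2 hm)
    rw [ihσ (k - 1) (by omega) hrest]
    have hXm : X q k - 1 = q ^ k * (1 - q ^ k)⁻¹ := by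
      unfold X
      field_simp
      ring
    have hw : q ^ ((s' + 1 - 1) * k) / qnum q k ^ (s' + 1)
        = (1 - q) ^ (s' + 1) * (X q k * (X q k - 1) ^ (s' + 1 - 1)) := by
      simp only [Nat.add_sub_cancel]
      rw [hXm]
      unfold qnum X
      rw [div_pow, mul_pow, ← pow_mul, div_div_eq_mul_div]
      rw [mul_comm k s']
      field_simp
      ring
      simp only [inv_pow, mul_assoc, inv_mul_cancel₀ (pow_ne_zero s' hk1)]
      ring
    rw [hw]
    simp only [List.sum_cons]
    rw [pow_add]
    ring

lemma mixed_eq (hn : 2 ≤ n) (hq0 : q ≠ 0) (hqn : q ^ n = 1)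
    (hprim : ∀ j, 1 ≤ j → j ≤ n - 1 → q ^ j ≠ 1) :
    ∀ (bs : List Bool) (m : ℕ), m ≤ n - 1 →
      mixed q m bs = (-(1 - q)) ^ bs.length * Ws q n (n - m) bs := by
  have hq1 : (1 : ℂ) - q ≠ 0 := by
    have := hsub hprim le_rfl (by omega : 1 ≤ n - 1)
    rwa [pow_one] at this
  intro bs
  induction bs with
  | nil => intro m _; simp [mixed, Ws_nil]
  | cons b bs ihb =>
    intro m hm
    show (∑ j ∈ Finset.Icc 1 m, q ^ j / qnum q j * mixed q (if b then j - 1 else j) bs) = _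
    rw [Ws_cons, Finset.mul_sum]
    apply Finset.sum_nbij' (i := fun j => n - j) (j := fun i => n - i)
    · intro a ha
      simp only [Finset.mem_Icc] at *
      omega
    · intro a ha
      simp only [Finset.mem_Icc] at *
      omega
    · intro a ha
      simp only [Finset.mem_Icc] at ha
      omega
    · intro a ha
      simp only [Finset.mem_Icc] at ha
      omega
    · intro j hj
      simp only [Finset.mem_Icc] at hj
      have hj1 : 1 ≤ j := hj.1
      have hjn : j ≤ n - 1 := le_trans hj.2 hm
      have hk1 : (1 : ℂ) - q ^ j ≠ 0 := hsub hprim hj1 hjn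
      have hnj1 : 1 ≤ n - j := by omega
      have hnjn : n - j ≤ n - 1 := by omega
      have hknj : (1 : ℂ) - q ^ (n - j) ≠ 0 := hsub hprim hnj1 hnjn
      have hqj : q ^ j ≠ 0 := pow_ne_zero _ hq0
      -- weight identity
      have hweight : q ^ j / qnum q j = -(1 - q) * X q (n - j) := by
        unfold qnum X
        have e1 : (1 - q ^ (n - j)) * q ^ j = q ^ j - 1 := by
          have : q ^ (n - j) * q ^ j = q ^ n := by
            rw [← pow_add]
            congr 1
            omega
          rw [sub_mul, one_mul, this, hqn]
        field_simp
        linear_combination e1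
      -- recursion arg
      have harg : mixed q (if b then j - 1 else j) bs
          = (-(1 - q)) ^ bs.length * Ws q n (if b then n - j + 1 else n - j) bs := by
        cases b with
        | false =>
          simp only [Bool.false_eq_true, if_false]
          exact ihb j hjn
        | true =>
          simp only [if_true]
          rw [ihb (j - 1) (by omega)]
          congr 2
          omega
      rw [hweight, harg, List.length_cons, pow_succ]
      ring


end Stmt12Aux

lemma Stmt12Aux.bind_blockOf_length :
    ∀ (l : List ℕ), (∀ x ∈ l, 0 < x) → (l.flatMap Stmt12Aux.blockOf).length = l.sum := by
  intro l
  induction l with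
  | nil => intro _; rfl
  | cons a l ih =>
    intro hpos
    have ha : 0 < a := hpos a (List.mem_cons_self)
    show (Stmt12Aux.blockOf a ++ l.flatMap Stmt12Aux.blockOf).length = (a :: l).sum
    rw [List.length_append, ih (fun x hx => hpos x (List.mem_cons_of_mem _ hx)), List.sum_cons]
    simp only [Stmt12Aux.blockOf, List.length_append, List.length_replicate,
      List.length_singleton]
    omega

theorem stmt12 (n : ℕ) (hn : 0 < n) (ζ : ℂ) (hζ : IsPrimitiveRoot ζ n)
    (s : List ℕ) (hs : s ≠ []) (hpos : ∀ x ∈ s, 0 < x) :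
    z ζ n s = (-1) ^ s.length * mixed ζ (n - 1) (pattern s) := by
  open Stmt12Aux in
  obtain ⟨s₀, ρ, hσ⟩ := List.exists_cons_of_ne_nil (show s.reverse ≠ [] by simpa using hs)
  by_cases hn1 : n = 1
  · subst hn1
    have hp : pattern s ≠ [] := by
      unfold pattern
      rw [hσ]
      show (List.replicate (s₀ - 1) false ++ [true]) ++ ρ.flatMap (fun si => List.replicate (si - 1) false ++ [true]) ≠ []
      simp
    obtain ⟨b, bs, hbs⟩ := List.exists_cons_of_ne_nil hp
    unfold z
    rw [hσ, hbs]
    show (∑ k ∈ Finset.Icc 1 (1-1), _ * zrev ζ (k - 1) ρ) = _ *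
      (∑ j ∈ Finset.Icc 1 (1-1), _ * mixed ζ (if b then j - 1 else j) bs)
    rw [show (1:ℕ) - 1 = 0 from rfl, Finset.Icc_eq_empty (by omega), Finset.sum_empty,
      Finset.sum_empty, mul_zero]
  · have hn2 : 2 ≤ n := by omega
    have hqn : ζ ^ n = 1 := hζ.pow_eq_one
    have hq0 : ζ ≠ 0 := by
      intro h
      rw [h] at hqn
      simp [zero_pow (by omega : n ≠ 0)] at hqn
    have hprim : ∀ j, 1 ≤ j → j ≤ n - 1 → ζ ^ j ≠ 1 := by
      intro j hj1 hj2 hj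
      have := Nat.le_of_dvd (by omega) (hζ.dvd_of_pow_eq_one j hj)
      omega
    have hposσ : ∀ x ∈ s.reverse, 0 < x := by
      intro x hx
      exact hpos x (List.mem_reverse.mp hx)
    have hρpos : ∀ x ∈ ρ, 0 < x := by
      intro x hx
      exact hposσ x (hσ ▸ List.mem_cons_of_mem _ hx)
    have hs₀ : 0 < s₀ := hposσ s₀ (hσ ▸ List.mem_cons_self)
    have hlen : s.length = ρ.length + 1 := by
      rw [← List.length_reverse, hσ, List.length_cons]
    have hsum : s.sum = s₀ + ρ.sum := by
      rw [← List.sum_reverse, hσ, List.sum_cons]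
    -- LHS
    unfold z
    rw [zrev_eq hn2 hq0 hprim s.reverse (n-1) le_rfl hposσ, hσ, Zx_cons]
    have hins : ∑ k ∈ Finset.Icc 1 (n - 1), X ζ k * (X ζ k - 1) ^ (s₀ - 1) * Zx ζ (k - 1) ρ
        = ∑ k ∈ Finset.Icc 1 (n - 1),
            X ζ k * (X ζ k - 1) ^ (s₀ - 1) * Zx ζ (k - 1) ρ * con ζ k 0 := by
      apply Finset.sum_congr rfl
      intro k _
      rw [con_zero, mul_one]
    rw [hins, Dlem hn2 hq0 hqn hprim ρ hρpos (s₀ - 1) 0 (by omega)]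
    -- RHS
    rw [mixed_eq hn2 hq0 hqn hprim (pattern s) (n-1) le_rfl]
    have hpat : pattern s = List.replicate (s₀ - 1) false ++ [true] ++ ρ.flatMap blockOf := by
      unfold pattern
      rw [hσ]
      show (List.replicate (s₀ - 1) false ++ [true]) ++ ρ.flatMap blockOf = _
      rfl
    have hplen : (pattern s).length = s.sum := by
      show (s.reverse.flatMap blockOf).length = s.sum
      rw [Stmt12Aux.bind_blockOf_length s.reverse hposσ, List.sum_reverse]
    rw [hplen, hpat, show n - (n - 1) = 1 by omega]
    have hσsum : (s₀ :: ρ).sum = s.sum := by rw [← hσ, List.sum_reverse]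
    rw [hσsum]
    have hsign : ((-1 : ℂ)) ^ (s₀ - 1 + ρ.sum + ρ.length)
        = (-1) ^ s.length * (-1) ^ s.sum := by
      calc ((-1 : ℂ)) ^ (s₀ - 1 + ρ.sum + ρ.length)
          = (-1) ^ (s₀ - 1 + ρ.sum + ρ.length) * (-1) ^ 2 := by norm_num
        _ = (-1) ^ (s₀ - 1 + ρ.sum + ρ.length + 2) := by ring
        _ = (-1) ^ (s.length + s.sum) := by
              rw [show s.length + s.sum = s₀ - 1 + ρ.sum + ρ.length + 2 by omega]
        _ = (-1) ^ s.length * (-1) ^ s.sum := by rw [pow_add]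
    rw [show (0 : ℕ) + 1 = 1 from rfl, hsign,
      show (-(1 - ζ)) ^ s.sum = (-1) ^ s.sum * (1 - ζ) ^ s.sum by rw [← mul_pow]; norm_num]
    ring
end

section
/- For all non-negative integers a, b and any n-th primitive root of unity ζ, z_n({2}^a, 3, {2}^b; ζ) + (1−ζ)·z_n({2}^{a+b+1}; ζ) = −z_n({2}^b, 3, {2}^a; ζ). -/
open Finset

noncomputable def S : ℕ → List (ℕ → ℂ) → ℂ
  | _, [] => 1
  | n, f :: L => ∑ k ∈ Finset.Icc 1 n, f k * S (k - 1) L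

lemma S_nil (n : ℕ) : S n [] = 1 := rfl
lemma S_cons (n : ℕ) (f : ℕ → ℂ) (L : List (ℕ → ℂ)) :
    S n (f :: L) = ∑ k ∈ Finset.Icc 1 n, f k * S (k - 1) L := rfl

lemma S_append_singleton (L : List (ℕ → ℂ)) (g : ℕ → ℂ) :
    ∀ n : ℕ, S n (L ++ [g]) =
      ∑ k ∈ Finset.Icc 1 n, g k * S (n - k) (L.map fun f j => f (j + k)) := by
  induction L with
  | nil => intro n; simp [S_cons, S_nil]
  | cons f L ih =>
    intro n
    rw [List.cons_append, S_cons]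
    have lhs : ∀ m ∈ Finset.Icc 1 n, f m * S (m-1) (L ++ [g])
        = ∑ k ∈ Finset.Icc 1 (m-1), g k * (f m * S (m-1-k) (L.map fun f j => f (j + k))) := by
      intro m _
      rw [ih]
      rw [Finset.mul_sum]
      refine Finset.sum_congr rfl fun k _ => by ring
    rw [Finset.sum_congr rfl lhs]
    -- now swap
    rw [Finset.sum_comm' (s' := fun k => Finset.Icc (k+1) n) (t' := Finset.Icc 1 n)
      (by intro m k; simp only [Finset.mem_Icc]; omega)]
    refine Finset.sum_congr rfl fun k hk => ?_
    simp only [Finset.mem_Icc] at hk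
    rw [List.map_cons, S_cons, Finset.mul_sum]
    rw [show Finset.Icc (k+1) n = Finset.map (addRightEmbedding k) (Finset.Icc 1 (n-k)) by
      rw [Finset.map_add_right_Icc, show 1+k = k+1 from by omega, show n-k+k = n from by omega]]
    rw [Finset.sum_map]
    refine Finset.sum_congr rfl fun j hj => ?_
    simp only [Finset.mem_Icc] at hj
    simp only [addRightEmbedding_apply]
    have h2 : j + k - 1 - k = j - 1 := by omega
    rw [h2]

lemma S_reverse (L : List (ℕ → ℂ)) : ∀ n : ℕ,
    S n L = S n (L.reverse.map fun f k => f (n + 1 - k)) := by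
  induction L with
  | nil => intro n; simp
  | cons f L ih =>
    intro n
    rw [S_cons, List.reverse_cons, List.map_append, List.map_singleton,
      S_append_singleton]
    refine Finset.sum_nbij' (i := fun k => n + 1 - k) (j := fun k => n + 1 - k)
      (fun a ha => ?_) (fun a ha => ?_) (fun a ha => ?_) (fun a ha => ?_) (fun k hk => ?_)
    · simp only [Finset.mem_Icc] at *; omega
    · simp only [Finset.mem_Icc] at *; omega
    · simp only [Finset.mem_Icc] at ha; show n + 1 - (n + 1 - a) = a; omega
    · simp only [Finset.mem_Icc] at ha; show n + 1 - (n + 1 - a) = a; omega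
    · simp only [Finset.mem_Icc] at hk
      have h1 : n + 1 - (n + 1 - k) = k := by omega
      have h2 : n - (n + 1 - k) = k - 1 := by omega
      rw [h1, h2]
      have h3 : (List.map (fun f j => f (j + (n + 1 - k))) (List.map (fun f k => f (n + 1 - k)) L.reverse))
          = List.map (fun f j => f (k - 1 + 1 - j)) L.reverse := by
        rw [List.map_map]
        refine List.map_congr_left fun h _ => ?_
        funext j
        show h (n + 1 - (j + (n + 1 - k))) = h (k - 1 + 1 - j)
        congr 1
        omega
      rw [h3, ← ih (k - 1)]

lemma S_congr {n : ℕ} {L M : List (ℕ → ℂ)}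
    (h : List.Forall₂ (fun f g => ∀ k : ℕ, 1 ≤ k → k ≤ n → f k = g k) L M) :
    ∀ m : ℕ, m ≤ n → S m L = S m M := by
  induction h with
  | nil => intro m _; rfl
  | cons hfg hLM ih =>
    intro m hm
    rw [S_cons, S_cons]
    refine Finset.sum_congr rfl fun k hk => ?_
    simp only [Finset.mem_Icc] at hk
    rw [hfg k hk.1 (le_trans hk.2 hm), ih (k - 1) (by omega)]

lemma S_middle_add (A : List (ℕ → ℂ)) (f g : ℕ → ℂ) (B : List (ℕ → ℂ)) :
    ∀ n : ℕ, S n (A ++ (fun k => f k + g k) :: B) = S n (A ++ f :: B) + S n (A ++ g :: B) := by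
  induction A with
  | nil =>
    intro n
    simp only [List.nil_append, S_cons, ← Finset.sum_add_distrib]
    exact Finset.sum_congr rfl fun k _ => by ring
  | cons h A ih =>
    intro n
    simp only [List.cons_append, S_cons, ← Finset.sum_add_distrib]
    exact Finset.sum_congr rfl fun k _ => by rw [ih]; ring

lemma S_middle_smul (A : List (ℕ → ℂ)) (c : ℂ) (f : ℕ → ℂ) (B : List (ℕ → ℂ)) :
    ∀ n : ℕ, S n (A ++ (fun k => c * f k) :: B) = c * S n (A ++ f :: B) := by
  induction A with
  | nil =>
    intro n
    simp only [List.nil_append, S_cons, Finset.mul_sum]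
    exact Finset.sum_congr rfl fun k _ => by ring
  | cons h A ih =>
    intro n
    simp only [List.cons_append, S_cons, Finset.mul_sum]
    exact Finset.sum_congr rfl fun k _ => by rw [ih]; ring

lemma forall₂_replicate {R : (ℕ → ℂ) → (ℕ → ℂ) → Prop} {f g : ℕ → ℂ} (h : R f g) :
    ∀ m : ℕ, List.Forall₂ R (List.replicate m f) (List.replicate m g) := by
  intro m
  induction m with
  | zero => simp
  | succ m ih => simpa [List.replicate_succ] using List.Forall₂.cons h ih

lemma qnum_reflect {ζ : ℂ} {n : ℕ} (hζn : ζ ^ n = 1) {k : ℕ} (hk : k ≤ n) :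
    qnum ζ (n - k) = -ζ ^ (n - k) * qnum ζ k := by
  unfold qnum
  rw [show -ζ ^ (n - k) * ((1 - ζ ^ k) / (1 - ζ)) = (-ζ ^ (n - k) * (1 - ζ ^ k)) / (1 - ζ) by
    ring]
  congr 1
  have : ζ ^ (n - k) * ζ ^ k = 1 := by rw [← pow_add, show n - k + k = n by omega, hζn]
  linear_combination -this

lemma pow_reflect {ζ : ℂ} {n : ℕ} (hζn : ζ ^ n = 1) (hζ0 : ζ ≠ 0) {k : ℕ} (hk : k ≤ n) :
    ζ ^ k = 1 / ζ ^ (n - k) := by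
  have h : ζ ^ k * ζ ^ (n - k) = 1 := by rw [← pow_add, show k + (n - k) = n by omega, hζn]
  rw [eq_div_iff (pow_ne_zero _ hζ0)]
  exact h

lemma t2_reflect {ζ : ℂ} {n : ℕ} (hζn : ζ ^ n = 1) (hζ0 : ζ ≠ 0) {k : ℕ} (hk : k ≤ n) :
    ζ ^ (n - k) / qnum ζ (n - k) ^ 2 = ζ ^ k / qnum ζ k ^ 2 := by
  have hx : ζ ^ (n - k) ≠ 0 := pow_ne_zero _ hζ0
  have hP : ζ ^ k * ζ ^ (n - k) = 1 := by
    rw [← pow_add, show k + (n - k) = n by omega, hζn]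
  rw [qnum_reflect hζn hk]
  rcases eq_or_ne (qnum ζ k) 0 with h0 | h0
  · simp [h0]
  · field_simp
    linear_combination (-1) * hP

lemma t3_reflect {ζ : ℂ} {n : ℕ} (hζn : ζ ^ n = 1) (hζ0 : ζ ≠ 0) {k : ℕ} (hk : k ≤ n) :
    ζ ^ (2 * (n - k)) / qnum ζ (n - k) ^ 3 = -1 * (ζ ^ k / qnum ζ k ^ 3) := by
  have hx : ζ ^ (n - k) ≠ 0 := pow_ne_zero _ hζ0
  have hP : ζ ^ k * ζ ^ (n - k) = 1 := by
    rw [← pow_add, show k + (n - k) = n by omega, hζn]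
  rw [qnum_reflect hζn hk]
  rcases eq_or_ne (qnum ζ k) 0 with h0 | h0
  · simp [h0]
  · have h2 : ζ ^ (2 * (n - k)) = ζ ^ (n - k) * ζ ^ (n - k) := by
      rw [two_mul, pow_add]
    field_simp
    linear_combination ((ζ ^ (n-k))^2) * hP

lemma u3_split {ζ : ℂ} (hζ1 : ζ ≠ 1) (k : ℕ) :
    ζ ^ k / qnum ζ k ^ 3
      = ζ ^ (2 * k) / qnum ζ k ^ 3 + (1 - ζ) * (ζ ^ k / qnum ζ k ^ 2) := by
  have key : (1 - ζ) * qnum ζ k = 1 - ζ ^ k := by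
    rw [qnum, mul_div_cancel₀]
    exact sub_ne_zero.mpr (fun h => hζ1 h.symm)
  rcases eq_or_ne (qnum ζ k) 0 with h0 | h0
  · simp [h0]
  · have h2 : ζ ^ (2 * k) = ζ ^ k * ζ ^ k := by rw [two_mul, pow_add]
    field_simp
    linear_combination (-(ζ ^ k)) * key

lemma zrev_eq_S (q : ℂ) : ∀ (l : List ℕ) (m : ℕ),
    zrev q m l = S m (l.map fun s k => q ^ ((s - 1) * k) / qnum q k ^ s) := by
  intro l
  induction l with
  | nil => intro m; rfl
  | cons s l ih =>
    intro m
    rw [zrev, List.map_cons, S_cons]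
    exact Finset.sum_congr rfl fun k _ => by rw [ih]

theorem stmt13 (a b n : ℕ) (hn : 0 < n) (ζ : ℂ) (hζ : IsPrimitiveRoot ζ n) :
    z ζ n (List.replicate a 2 ++ [3] ++ List.replicate b 2)
      + (1 - ζ) * z ζ n (List.replicate (a + b + 1) 2)
      = -z ζ n (List.replicate b 2 ++ [3] ++ List.replicate a 2) := by
  have hζn : ζ ^ n = 1 := hζ.pow_eq_one
  have hζ0 : ζ ≠ 0 := by
    intro h
    rw [h, zero_pow hn.ne'] at hζn
    exact zero_ne_one hζn
  set N := n - 1 with hN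
  set T2 : ℕ → ℂ := fun k => ζ ^ k / qnum ζ k ^ 2 with hT2
  set T3 : ℕ → ℂ := fun k => ζ ^ (2 * k) / qnum ζ k ^ 3 with hT3
  set U : ℕ → ℂ := fun k => ζ ^ k / qnum ζ k ^ 3 with hU
  -- rewrite the three z-values as S-values
  have hza : z ζ n (List.replicate a 2 ++ [3] ++ List.replicate b 2)
      = S N (List.replicate b T2 ++ T3 :: List.replicate a T2) := by
    rw [z, zrev_eq_S]
    congr 1
    simp [List.reverse_append, List.map_append, List.map_replicate, hT2, hT3]
  have hzb : z ζ n (List.replicate b 2 ++ [3] ++ List.replicate a 2)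
      = S N (List.replicate a T2 ++ T3 :: List.replicate b T2) := by
    rw [z, zrev_eq_S]
    congr 1
    simp [List.reverse_append, List.map_append, List.map_replicate, hT2, hT3]
  have hzm : z ζ n (List.replicate (a + b + 1) 2) = S N (List.replicate (a + b + 1) T2) := by
    rw [z, zrev_eq_S]
    congr 1
    simp [List.reverse_replicate, List.map_replicate, hT2]
  rw [hza, hzb, hzm]
  -- duality applied to the list `replicate a T2 ++ T3 :: replicate b T2`
  have hdual : S N (List.replicate a T2 ++ T3 :: List.replicate b T2)
      = S N (List.replicate b T2 ++ (fun k => -1 * U k) :: List.replicate a T2) := by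
    rw [S_reverse]
    have hrev : (List.replicate a T2 ++ T3 :: List.replicate b T2).reverse
        = List.replicate b T2 ++ T3 :: List.replicate a T2 := by
      simp [List.reverse_append, List.reverse_replicate, List.reverse_cons, List.append_assoc]
    rw [hrev]; simp only [List.map_append, List.map_cons, List.map_replicate]
    refine S_congr ?_ N le_rfl
    have hrefl2 : ∀ k : ℕ, 1 ≤ k → k ≤ N → T2 (N + 1 - k) = T2 k := by
      intro k h1 h2
      have hkn : k ≤ n := by omega
      have he : N + 1 - k = n - k := by omega
      rw [hT2]
      simp only [he]
      exact t2_reflect hζn hζ0 hkn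
    have hrefl3 : ∀ k : ℕ, 1 ≤ k → k ≤ N → T3 (N + 1 - k) = -1 * U k := by
      intro k h1 h2
      have hkn : k ≤ n := by omega
      have he : N + 1 - k = n - k := by omega
      rw [hT3, hU]
      simp only [he]
      exact t3_reflect hζn hζ0 hkn
    exact List.rel_append (forall₂_replicate hrefl2 b)
      (List.Forall₂.cons hrefl3 (forall₂_replicate hrefl2 a))
  rw [hdual, S_middle_smul]
  -- split U into T3 + (1-ζ) * T2
  have hsplit : S N (List.replicate b T2 ++ U :: List.replicate a T2)
      = S N (List.replicate b T2 ++ T3 :: List.replicate a T2)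
        + (1 - ζ) * S N (List.replicate b T2 ++ T2 :: List.replicate a T2) := by
    have step1 : S N (List.replicate b T2 ++ U :: List.replicate a T2)
        = S N (List.replicate b T2
            ++ (fun k => T3 k + (1 - ζ) * T2 k) :: List.replicate a T2) := by
      refine S_congr ?_ N le_rfl
      have hmid : ∀ k : ℕ, 1 ≤ k → k ≤ N → U k = T3 k + (1 - ζ) * T2 k := by
        intro k h1 h2
        have hn2 : 2 ≤ n := by omega
        have hζ1 : ζ ≠ 1 := hζ.ne_one hn2
        exact u3_split hζ1 k
      exact List.rel_append (forall₂_replicate (fun k _ _ => rfl) b)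
        (List.Forall₂.cons hmid (forall₂_replicate (fun k _ _ => rfl) a))
    rw [step1, S_middle_add, S_middle_smul]
  have hrepl : List.replicate b T2 ++ T2 :: List.replicate a T2
      = List.replicate (a + b + 1) T2 := by
    rw [show a + b + 1 = b + (a + 1) by omega, List.replicate_add, List.replicate_succ]
  rw [hrepl] at hsplit
  rw [hsplit]
  ring
end
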